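/- arXiv:math/0304383 — 5 statements merged into one kernel-verified Lean document; each statement's English description precedes it below -/
import Mathlib

section
/- There is a constant c > 0 such that the following holds for all r ∈ (0,1], ε ≥ 0, and μ ≥ 0. If f : [−r² − εr, εr] → ℝ is a C² function satisfying ε² f″ − f′ + μ f ≥ 0 and f ≥ 0 on this interval, then f(0) ≤ (c e^{μ r²} / r³) ∫_{−r² − εr}^{εr} f(s) ds. -/
open MeasureTheory

set_option maxHeartbeats 2000000 in
/-- One-dimensional mean value inequality: there is a universal constant `c > 0` such that
for all `r ∈ (0,1]`, `ε ≥ 0`, `μ ≥ 0`, and every `C²` function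
`f : [−r² − εr, εr] → ℝ` (with derivatives `f'`, `f''` within the interval) satisfying
`ε² f'' − f' + μ f ≥ 0` and `f ≥ 0`, one has
`f(0) ≤ (c e^{μ r²} / r³) ∫_{−r²−εr}^{εr} f(s) ds`. -/
theorem statement6 :
    ∃ c : ℝ, 0 < c ∧
      ∀ r ∈ Set.Ioc (0 : ℝ) 1, ∀ ε : ℝ, 0 ≤ ε → ∀ μ : ℝ, 0 ≤ μ →
      ∀ f f' f'' : ℝ → ℝ,
        (∀ s ∈ Set.Icc (-r ^ 2 - ε * r) (ε * r),
          HasDerivWithinAt f (f' s) (Set.Icc (-r ^ 2 - ε * r) (ε * r)) s) →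
        (∀ s ∈ Set.Icc (-r ^ 2 - ε * r) (ε * r),
          HasDerivWithinAt f' (f'' s) (Set.Icc (-r ^ 2 - ε * r) (ε * r)) s) →
        ContinuousOn f (Set.Icc (-r ^ 2 - ε * r) (ε * r)) →
        ContinuousOn f' (Set.Icc (-r ^ 2 - ε * r) (ε * r)) →
        ContinuousOn f'' (Set.Icc (-r ^ 2 - ε * r) (ε * r)) →
        (∀ s ∈ Set.Icc (-r ^ 2 - ε * r) (ε * r),
          ε ^ 2 * f'' s - f' s + μ * f s ≥ 0) →
        (∀ s ∈ Set.Icc (-r ^ 2 - ε * r) (ε * r), 0 ≤ f s) →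
        f 0 ≤ c * Real.exp (μ * r ^ 2) / r ^ 3 *
          ∫ s in Set.Icc (-r ^ 2 - ε * r) (ε * r), f s := by
  refine ⟨4, by norm_num, ?_⟩
  rintro r ⟨hr0, hr1⟩ ε hε μ hμ f f' f'' hdf hdf' hcf hcf' _hcf'' hineq hpos
  set a : ℝ := -r ^ 2 - ε * r with ha_def
  set b : ℝ := ε * r with hb_def
  set I : Set ℝ := Set.Icc a b with hI_def
  have hr2 : (0:ℝ) < r ^ 2 := by positivity
  have hb0 : (0:ℝ) ≤ b := by positivity
  have ha0 : a ≤ -r ^ 2 := by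
    have : (0:ℝ) ≤ ε * r := by positivity
    simp only [ha_def]; linarith
  have haneg : a < 0 := by linarith
  have hab : a ≤ b := by linarith
  have h0I : (0:ℝ) ∈ I := ⟨le_of_lt haneg, hb0⟩
  have hImeas : MeasurableSet I := measurableSet_Icc
  have hfi : IntegrableOn f I := hcf.integrableOn_Icc
  set T : ℝ := ∫ s in I, f s with hT_def
  have hT0 : 0 ≤ T := setIntegral_nonneg hImeas hpos
  have hf0 : 0 ≤ f 0 := hpos 0 h0I
  have hfae : 0 ≤ᵐ[volume.restrict I] f := (ae_restrict_iff' hImeas).2 (ae_of_all _ hpos)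
  -- subintervals
  have hsubL : Set.Icc (-r ^ 2) (0:ℝ) ⊆ I := Set.Icc_subset_Icc ha0 hb0
  have hsubR : Set.Icc (0:ℝ) b ⊆ I := Set.Icc_subset_Icc (le_of_lt haneg) le_rfl
  -- the antiderivative G
  set G : ℝ → ℝ := fun s => ∫ t in (0:ℝ)..s, f t with hG_def
  have hG : ∀ s ∈ I, HasDerivWithinAt G (f s) I s := by
    intro s hs
    haveI : Fact (s ∈ Set.Icc a b) := ⟨hs⟩
    have hii : IntervalIntegrable f volume 0 s :=
      (hcf.mono (Set.uIcc_subset_Icc h0I hs)).intervalIntegrable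
    exact intervalIntegral.integral_hasDerivWithinAt_right hii
      (hcf.stronglyMeasurableAtFilter_nhdsWithin hImeas s) (hcf s hs)
  have hGcont : ContinuousOn G I := fun s hs => (hG s hs).continuousWithinAt
  -- bounds on G
  have hGub : ∀ s ∈ I, 0 ≤ s → G s ≤ T := by
    intro s hs hs0
    have : G s = ∫ t in Set.Ioc (0:ℝ) s, f t := by
      simp only [hG_def]; exact intervalIntegral.integral_of_le hs0
    rw [this]
    exact setIntegral_mono_set hfi hfae
      ((Set.Ioc_subset_Icc_self.trans (Set.Icc_subset_Icc (le_of_lt haneg) hs.2)).eventuallyLE)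
  have hGlb : ∀ s ∈ I, s ≤ 0 → -T ≤ G s := by
    intro s hs hs0
    have h1 : G s = -∫ t in Set.Ioc s (0:ℝ), f t := by
      simp only [hG_def]
      rw [intervalIntegral.integral_symm, intervalIntegral.integral_of_le hs0]
    rw [h1, neg_le_neg_iff]
    exact setIntegral_mono_set hfi hfae
      ((Set.Ioc_subset_Icc_self.trans (Set.Icc_subset_Icc hs.1 hb0)).eventuallyLE)
  -- the monotone function R
  set R : ℝ → ℝ := fun s => ε ^ 2 * f' s - f s + μ * G s with hR_def
  have hRmono : MonotoneOn R I := by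
    apply monotoneOn_of_hasDerivWithinAt_nonneg (convex_Icc a b)
      (f' := fun s => ε ^ 2 * f'' s - f' s + μ * f s)
    · exact ((continuousOn_const.mul hcf').sub hcf).add (continuousOn_const.mul hGcont)
    · intro x hx
      rw [interior_Icc] at hx ⊢
      have hxI : x ∈ I := Set.Ioo_subset_Icc_self hx
      exact ((((hdf' x hxI).const_mul (ε ^ 2)).sub (hdf x hxI)).add
        ((hG x hxI).const_mul μ)).mono Set.Ioo_subset_Icc_self
    · intro x hx
      rw [interior_Icc] at hx
      exact hineq x (Set.Ioo_subset_Icc_self hx)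
  have hG0 : G 0 = 0 := intervalIntegral.integral_same
  have hR0 : R 0 = ε ^ 2 * f' 0 - f 0 := by simp [hR_def, hG0]
  set A : ℝ := ε ^ 2 * f' 0 - f 0 with hA_def
  -- Fact on the right: ε² f' s − f s ≥ A − μT on [0, b]
  have hFactR : ∀ s ∈ Set.Icc (0:ℝ) b, A - μ * T ≤ ε ^ 2 * f' s - f s := by
    intro s hs
    have h1 : R 0 ≤ R s := hRmono h0I (hsubR hs) hs.1
    have h2 : μ * G s ≤ μ * T := mul_le_mul_of_nonneg_left (hGub s (hsubR hs) hs.1) hμ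
    rw [hR0] at h1; simp only [hR_def] at h1; linarith
  -- Fact on the left: ε² f' s − f s ≤ A + μT on [−r², 0]
  have hFactL : ∀ s ∈ Set.Icc (-r ^ 2) (0:ℝ), ε ^ 2 * f' s - f s ≤ A + μ * T := by
    intro s hs
    have h1 : R s ≤ R 0 := hRmono (hsubL hs) h0I hs.2
    have h2 : -(μ * T) ≤ μ * G s := by
      have := mul_le_mul_of_nonneg_left (hGlb s (hsubL hs) hs.2) hμ
      linarith [this]
    rw [hR0] at h1; simp only [hR_def] at h1; linarith
  -- volume computation helper
  have hvol : (volume (Set.Icc (-r ^ 2) (0:ℝ))).toReal = r ^ 2 := by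
    rw [Real.volume_Icc]
    rw [ENNReal.toReal_ofReal (by linarith)]
    ring
  -- main dichotomy
  have main : f 0 * r ^ 2 ≤ 4 * T ∨ (∀ s ∈ Set.Icc (-r ^ 2) (0:ℝ), f 0 / 2 - 2 * (μ * T) ≤ f s) := by
    rcases eq_or_lt_of_le hε with hε0 | hε0
    · -- ε = 0
      right
      intro s hs
      have h1 := hFactL s hs
      have hA0 : A = -f 0 := by rw [hA_def, ← hε0]; ring
      rw [hA0, ← hε0] at h1
      have hMT : 0 ≤ μ * T := mul_nonneg hμ hT0
      nlinarith
    · rcases le_or_gt (μ * T - f 0 / 2) A with hA | hA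
      · -- right case: exponential growth on [0, b]
        left
        have hε2 : (0:ℝ) < ε ^ 2 := by positivity
        set B : ℝ := A - μ * T with hB_def
        have hB : -(f 0) / 2 ≤ B := by rw [hB_def]; linarith
        set φ : ℝ → ℝ := fun s => (f s + B) * Real.exp (-s / ε ^ 2) with hφ_def
        have hexp_deriv : ∀ x : ℝ, HasDerivAt (fun s : ℝ => Real.exp (-s / ε ^ 2))
            (Real.exp (-x / ε ^ 2) * (-1 / ε ^ 2)) x := by
          intro x
          have h1 : HasDerivAt (fun s : ℝ => -s / ε ^ 2) (-1 / ε ^ 2) x := by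
            simpa using ((hasDerivAt_id x).neg.div_const (ε ^ 2))
          exact h1.exp
        have hφmono : MonotoneOn φ (Set.Icc (0:ℝ) b) := by
          apply monotoneOn_of_hasDerivWithinAt_nonneg (convex_Icc 0 b)
            (f' := fun x => f' x * Real.exp (-x / ε ^ 2)
              + (f x + B) * (Real.exp (-x / ε ^ 2) * (-1 / ε ^ 2)))
          · exact ((hcf.mono hsubR).add continuousOn_const).mul
              (Real.continuous_exp.comp (continuous_id.neg.div_const (ε ^ 2))).continuousOn
          · intro x hx
            rw [interior_Icc] at hx ⊢
            have hxI : x ∈ I := hsubR (Set.Ioo_subset_Icc_self hx)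
            have := ((((hdf x hxI).mono hsubR).add
              (hasDerivWithinAt_const _ _ B)).mul
              ((hexp_deriv x).hasDerivWithinAt)).mono (Set.Ioo_subset_Icc_self (a := (0:ℝ)) (b := b))
            rw [add_zero] at this; exact this
          · intro x hx
            rw [interior_Icc] at hx
            have hxm : x ∈ Set.Icc (0:ℝ) b := Set.Ioo_subset_Icc_self hx
            have h1 := hFactR x hxm
            have key : 0 ≤ Real.exp (-x / ε ^ 2) / ε ^ 2 * (ε ^ 2 * f' x - f x - B) := by
              apply mul_nonneg (by positivity)
              rw [hB_def]; linarith
            have heq : f' x * Real.exp (-x / ε ^ 2)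
                + (f x + B) * (Real.exp (-x / ε ^ 2) * (-1 / ε ^ 2))
                = Real.exp (-x / ε ^ 2) / ε ^ 2 * (ε ^ 2 * f' x - f x - B) := by
              field_simp
              ring
            rw [heq]; exact key
        -- pointwise lower bound on [0, b]
        have hlow : ∀ s ∈ Set.Icc (0:ℝ) b, f 0 + f 0 / (2 * ε ^ 2) * s ≤ f s := by
          intro s hs
          have h1 : φ 0 ≤ φ s := hφmono (Set.left_mem_Icc.2 hb0) hs hs.1
          have hφ0 : φ 0 = f 0 + B := by simp [hφ_def]
          have hE : Real.exp (-s / ε ^ 2) = (Real.exp (s / ε ^ 2))⁻¹ := by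
            rw [← Real.exp_neg]; ring_nf
          have hEpos : 0 < Real.exp (s / ε ^ 2) := Real.exp_pos _
          have h2 : (f 0 + B) * Real.exp (s / ε ^ 2) ≤ f s + B := by
            rw [hφ0] at h1
            simp only [hφ_def, hE] at h1
            calc (f 0 + B) * Real.exp (s / ε ^ 2)
                ≤ (f s + B) * (Real.exp (s / ε ^ 2))⁻¹ * Real.exp (s / ε ^ 2) := by
                  exact mul_le_mul_of_nonneg_right h1 (le_of_lt hEpos)
              _ = f s + B := by field_simp
          have h3 : 1 + s / ε ^ 2 ≤ Real.exp (s / ε ^ 2) := by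
            linarith [Real.add_one_le_exp (s / ε ^ 2)]
          have h4 : 0 ≤ f 0 + B := by linarith
          have h5 : (f 0 + B) * (1 + s / ε ^ 2) ≤ (f 0 + B) * Real.exp (s / ε ^ 2) :=
            mul_le_mul_of_nonneg_left h3 h4
          have hs0 : 0 ≤ s := hs.1
          have h6 : 0 ≤ s / ε ^ 2 := by positivity
          have h7 : f 0 / 2 * (s / ε ^ 2) ≤ (f 0 + B) * (s / ε ^ 2) := by
            apply mul_le_mul_of_nonneg_right _ h6
            linarith
          have : f 0 + f 0 / (2 * ε ^ 2) * s = f 0 + f 0 / 2 * (s / ε ^ 2) := by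
            field_simp
          rw [this]
          nlinarith
        -- integrate the lower bound
        have hintR : IntegrableOn f (Set.Icc (0:ℝ) b) := hfi.mono_set hsubR
        have hint1 : IntegrableOn (fun s : ℝ => f 0 + f 0 / (2 * ε ^ 2) * s) (Set.Icc (0:ℝ) b) :=
          (continuous_const.add (continuous_const.mul continuous_id)).integrableOn_Icc
        have h8 : (∫ s in Set.Icc (0:ℝ) b, (f 0 + f 0 / (2 * ε ^ 2) * s))
            ≤ ∫ s in Set.Icc (0:ℝ) b, f s :=
          setIntegral_mono_on hint1 hintR measurableSet_Icc hlow
        have h9 : (∫ s in Set.Icc (0:ℝ) b, f s) ≤ T :=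
          setIntegral_mono_set hfi hfae (hsubR.eventuallyLE)
        have h10 : (∫ s in Set.Icc (0:ℝ) b, (f 0 + f 0 / (2 * ε ^ 2) * s))
            = f 0 * b + f 0 / (2 * ε ^ 2) * (b ^ 2 / 2) := by
          rw [MeasureTheory.integral_Icc_eq_integral_Ioc,
            ← intervalIntegral.integral_of_le hb0]
          rw [intervalIntegral.integral_add intervalIntegrable_const
            ((intervalIntegral.intervalIntegrable_id).const_mul _)]
          rw [intervalIntegral.integral_const_mul, integral_id, intervalIntegral.integral_const]
          simp
          ring
        have hbsq : f 0 / (2 * ε ^ 2) * (b ^ 2 / 2) = f 0 * r ^ 2 / 4 := by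
          rw [hb_def]; field_simp; ring
        have h11 : 0 ≤ f 0 * b := mul_nonneg hf0 hb0
        rw [h10, hbsq] at h8
        linarith
      · -- left case
        right
        intro s hs
        have hε2 : (0:ℝ) < ε ^ 2 := by positivity
        set W : ℝ := A + μ * T with hW_def
        set ψ : ℝ → ℝ := fun s => (f s + W) * Real.exp (-s / ε ^ 2) with hψ_def
        have hexp_deriv : ∀ x : ℝ, HasDerivAt (fun s : ℝ => Real.exp (-s / ε ^ 2))
            (Real.exp (-x / ε ^ 2) * (-1 / ε ^ 2)) x := by
          intro x
          have h1 : HasDerivAt (fun s : ℝ => -s / ε ^ 2) (-1 / ε ^ 2) x := by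
            simpa using ((hasDerivAt_id x).neg.div_const (ε ^ 2))
          exact h1.exp
        have hψanti : AntitoneOn ψ (Set.Icc (-r ^ 2) (0:ℝ)) := by
          apply antitoneOn_of_hasDerivWithinAt_nonpos (convex_Icc _ _)
            (f' := fun x => f' x * Real.exp (-x / ε ^ 2)
              + (f x + W) * (Real.exp (-x / ε ^ 2) * (-1 / ε ^ 2)))
          · exact ((hcf.mono hsubL).add continuousOn_const).mul
              (Real.continuous_exp.comp (continuous_id.neg.div_const (ε ^ 2))).continuousOn
          · intro x hx
            rw [interior_Icc] at hx ⊢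
            have hxI : x ∈ I := hsubL (Set.Ioo_subset_Icc_self hx)
            have := ((((hdf x hxI).mono hsubL).add
              (hasDerivWithinAt_const _ _ W)).mul
              ((hexp_deriv x).hasDerivWithinAt)).mono (Set.Ioo_subset_Icc_self (a := (-r^2:ℝ)) (b := (0:ℝ)))
            rw [add_zero] at this; exact this
          · intro x hx
            rw [interior_Icc] at hx
            have hxm : x ∈ Set.Icc (-r ^ 2) (0:ℝ) := Set.Ioo_subset_Icc_self hx
            have h1 := hFactL x hxm
            have key : Real.exp (-x / ε ^ 2) / ε ^ 2 * (ε ^ 2 * f' x - f x - W) ≤ 0 := by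
              apply mul_nonpos_of_nonneg_of_nonpos (by positivity)
              rw [hW_def]; linarith
            have heq : f' x * Real.exp (-x / ε ^ 2)
                + (f x + W) * (Real.exp (-x / ε ^ 2) * (-1 / ε ^ 2))
                = Real.exp (-x / ε ^ 2) / ε ^ 2 * (ε ^ 2 * f' x - f x - W) := by
              field_simp
              ring
            rw [heq]; exact key
        have h1 : ψ 0 ≤ ψ s := hψanti hs (Set.right_mem_Icc.2 (by linarith)) hs.2
        have hψ0 : ψ 0 = f 0 + W := by simp [hψ_def]
        have hE1 : 1 ≤ Real.exp (-s / ε ^ 2) := by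
          rw [Real.one_le_exp_iff]
          exact div_nonneg (by linarith [hs.2]) (by positivity)
        have hMT : 0 ≤ μ * T := mul_nonneg hμ hT0
        rw [hψ0] at h1
        simp only [hψ_def] at h1
        rcases le_or_gt 0 (f s + W) with hw | hw
        · -- f s ≥ -W
          have : -W ≤ f s := by linarith
          rw [hW_def] at this
          linarith
        · have h2 : (f s + W) * Real.exp (-s / ε ^ 2) ≤ (f s + W) * 1 := by
            apply mul_le_mul_of_nonpos_left _ (le_of_lt hw)
            exact hE1
          have h3 : f 0 + W ≤ f s + W := by linarith
          have h4 : f 0 ≤ f s := by linarith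
          linarith
  -- finish
  have hr3 : (0:ℝ) < r ^ 3 := by positivity
  have hexp1 : 1 ≤ Real.exp (μ * r ^ 2) := Real.one_le_exp (by positivity)
  have hexp2 : μ * r ^ 2 + 1 ≤ Real.exp (μ * r ^ 2) := by
    linarith [Real.add_one_le_exp (μ * r ^ 2)]
  rw [div_mul_eq_mul_div, le_div_iff₀ hr3]
  rcases main with h | h
  · -- f 0 * r^2 ≤ 4T
    nlinarith [mul_le_of_le_one_right hf0 hr1, mul_nonneg hf0 (le_of_lt hr2),
      mul_le_mul_of_nonneg_left hexp1 (mul_nonneg (by norm_num : (0:ℝ) ≤ 4) hT0)]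
  · -- integrate left bound
    have hintL : IntegrableOn f (Set.Icc (-r ^ 2) (0:ℝ)) := hfi.mono_set hsubL
    have h8 : (∫ _ in Set.Icc (-r ^ 2) (0:ℝ), (f 0 / 2 - 2 * (μ * T)))
        ≤ ∫ s in Set.Icc (-r ^ 2) (0:ℝ), f s :=
      setIntegral_mono_on (integrableOn_const (by
        rw [Real.volume_Icc]; exact ENNReal.ofReal_ne_top)) hintL measurableSet_Icc h
    have h9 : (∫ s in Set.Icc (-r ^ 2) (0:ℝ), f s) ≤ T :=
      setIntegral_mono_set hfi hfae (hsubL.eventuallyLE)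
    rw [setIntegral_const, measureReal_def, hvol, smul_eq_mul] at h8
    -- r^2 * (f 0/2 - 2 μ T) ≤ T
    have hMT : 0 ≤ μ * T := mul_nonneg hμ hT0
    nlinarith [mul_le_of_le_one_right hMT hr1, mul_le_of_le_one_right hT0 hr1,
      mul_le_mul_of_nonneg_left hexp2 (mul_nonneg (by norm_num : (0:ℝ) ≤ 4) hT0),
      mul_nonneg hMT (le_of_lt hr2), mul_nonneg hf0 (le_of_lt hr2)]
end

section
/- Let p > 1 and set κ_p := p if p ≥ 2 and κ_p := p/(p−1) if 1 < p ≤ 2. Then for every positive integer n, every δ > 0, and every smooth 1-periodic function ξ : ℝ → ℝⁿ one has ‖ξ′‖_p ≤ κ_p ( δ^{−1} ‖ξ‖_p + δ ‖ξ″‖_p ). -/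
open MeasureTheory

/-- The `L^p` norm of a loop, `‖f‖_p = (∫₀¹ |f(t)|^p dt)^{1/p}`. -/
noncomputable def loopNorm (p : ℝ) {n : ℕ} (f : ℝ → EuclideanSpace ℝ (Fin n)) : ℝ :=
  (∫ t in Set.Ioc (0 : ℝ) 1, ‖f t‖ ^ p) ^ (1 / p)

/-- The constant `κ_p`: `κ_p = p` for `p ≥ 2` and `κ_p = p/(p−1)` for `1 < p ≤ 2`. -/
noncomputable def kappa (p : ℝ) : ℝ := if 2 ≤ p then p else p / (p - 1)

set_option maxHeartbeats 1000000

section helpers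

lemma periodic_deriv {E : Type*} [NormedAddCommGroup E] [NormedSpace ℝ E]
    (f : ℝ → E) (hf : Function.Periodic f 1) : Function.Periodic (deriv f) 1 := by
  intro x
  have h : (fun y => f (y + 1)) = f := funext fun y => hf y
  rw [← deriv_comp_add_const, h]

lemma eLp_toReal (p : ℝ) (hp : 0 < p) {F : Type*} [NormedAddCommGroup F] (f : ℝ → F)
    (hf : AEStronglyMeasurable f (volume.restrict (Set.Ioc (0:ℝ) 1))) :
    (eLpNorm f (ENNReal.ofReal p) (volume.restrict (Set.Ioc (0:ℝ) 1))).toReal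
      = (∫ t in Set.Ioc (0:ℝ) 1, ‖f t‖ ^ p) ^ (1 / p) := by
  rw [eLpNorm_eq_lintegral_rpow_enorm_toReal (by simp [hp]) ENNReal.ofReal_ne_top,
    ENNReal.toReal_ofReal hp.le]
  rw [MeasureTheory.integral_eq_lintegral_of_nonneg_ae
    (Filter.Eventually.of_forall fun t => Real.rpow_nonneg (norm_nonneg _) p)
    ((hf.norm.aemeasurable.pow_const p).aestronglyMeasurable)]
  rw [← ENNReal.toReal_rpow]
  congr 1
  refine congrArg ENNReal.toReal (lintegral_congr fun t => ?_)
  rw [← ENNReal.ofReal_rpow_of_nonneg (norm_nonneg _) hp.le, ← ofReal_norm]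

lemma eLp_lt_top (p : ℝ) {F : Type*} [NormedAddCommGroup F] (f : ℝ → F) (hf : Continuous f) :
    eLpNorm f (ENNReal.ofReal p) (volume.restrict (Set.Ioc (0:ℝ) 1)) < ⊤ := by
  obtain ⟨M, hM⟩ := (isCompact_Icc (a := (0:ℝ)) (b := 1)).exists_bound_of_continuousOn
    hf.norm.continuousOn
  have hb : ∀ᵐ x ∂(volume.restrict (Set.Ioc (0:ℝ) 1)), ‖f x‖ ≤ M := by
    filter_upwards [ae_restrict_mem measurableSet_Ioc] with x hx
    simpa using hM x (Set.Ioc_subset_Icc_self hx)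
  calc eLpNorm f (ENNReal.ofReal p) (volume.restrict (Set.Ioc (0:ℝ) 1))
      ≤ (volume.restrict (Set.Ioc (0:ℝ) 1)) Set.univ ^ (ENNReal.ofReal p).toReal⁻¹
          * ENNReal.ofReal M := eLpNorm_le_of_ae_bound hb
    _ < ⊤ := by
        rw [Measure.restrict_apply_univ, Real.volume_Ioc]
        simp only [sub_zero, ENNReal.ofReal_one, ENNReal.one_rpow, one_mul]
        exact ENNReal.ofReal_lt_top

lemma cont_slide (h : ℝ → ℝ) (hh : Continuous h) (δ : ℝ) :
    Continuous fun t => ∫ r in t..(t + δ), h r := by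
  have hint : ∀ a b : ℝ, IntervalIntegrable h volume a b := fun a b => hh.intervalIntegrable a b
  have heq : (fun t => ∫ r in t..(t + δ), h r)
      = fun t => (∫ r in (0:ℝ)..(t + δ), h r) - ∫ r in (0:ℝ)..t, h r := by
    funext t
    rw [← intervalIntegral.integral_interval_sub_left (hint 0 (t + δ)) (hint 0 t)]
  rw [heq]
  exact ((intervalIntegral.continuous_primitive hint 0).comp
    (continuous_id.add continuous_const)).sub (intervalIntegral.continuous_primitive hint 0)

lemma deriv_repr {n : ℕ} (ξ : ℝ → EuclideanSpace ℝ (Fin n)) (hξ : ContDiff ℝ (⊤ : ℕ∞) ξ)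
    (δ : ℝ) (hδ : 0 < δ) (t : ℝ) :
    deriv ξ t = δ⁻¹ • ξ (t + δ) - δ⁻¹ • ξ t
      - δ⁻¹ • ∫ r in t..(t + δ), (t + δ - r) • deriv (deriv ξ) r := by
  have hξ1 : ContDiff ℝ (⊤ : ℕ∞) (deriv ξ) := (contDiff_infty_iff_deriv.mp hξ).2
  have hd : Differentiable ℝ ξ := (contDiff_infty_iff_deriv.mp hξ).1
  have hd1 : Differentiable ℝ (deriv ξ) := (contDiff_infty_iff_deriv.mp hξ1).1
  have hcont2 : Continuous (deriv (deriv ξ)) := (contDiff_infty_iff_deriv.mp hξ1).2.continuous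
  set F : ℝ → EuclideanSpace ℝ (Fin n) := fun r => ξ r + (t + δ - r) • deriv ξ r with hF
  have key : ∫ r in t..(t + δ), (t + δ - r) • deriv (deriv ξ) r = F (t + δ) - F t := by
    refine intervalIntegral.integral_eq_sub_of_hasDerivAt (fun r _ => ?_) ?_
    · have h1 : HasDerivAt ξ (deriv ξ r) r := (hd r).hasDerivAt
      have h2 : HasDerivAt (fun y : ℝ => t + δ - y) (-1) r := by
        simpa using ((hasDerivAt_id r).const_sub (t + δ))
      have h3 : HasDerivAt (deriv ξ) (deriv (deriv ξ) r) r := (hd1 r).hasDerivAt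
      have := h1.add (h2.smul h3)
      refine (show HasDerivAt F (deriv ξ r + ((t + δ - r) • deriv (deriv ξ) r + (-1:ℝ) • deriv ξ r)) r from this).congr_deriv ?_
      rw [neg_one_smul]; abel
    · exact (Continuous.smul (show Continuous fun r : ℝ => t + δ - r by continuity) hcont2).intervalIntegrable _ _
  rw [key, hF]
  simp only [sub_self, zero_smul, add_zero, add_sub_cancel_left]
  rw [smul_sub, smul_add, smul_smul, inv_mul_cancel₀ hδ.ne', one_smul]
  abel

lemma shift_integral (G : ℝ → ℝ) (hG : Function.Periodic G 1) (u : ℝ) :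
    ∫ t in Set.Ioc (0:ℝ) 1, G (t + u) = ∫ t in Set.Ioc (0:ℝ) 1, G t := by
  rw [← intervalIntegral.integral_of_le zero_le_one,
      ← intervalIntegral.integral_of_le (zero_le_one (α := ℝ))]
  rw [intervalIntegral.integral_comp_add_right]
  have := hG.intervalIntegral_add_eq u 0
  simpa [add_comm] using this

lemma pointwise_holder (g : ℝ → ℝ) (hg : Continuous g) (hgn : ∀ r, 0 ≤ g r)
    (p q : ℝ) (hpq : p.HolderConjugate q) (δ : ℝ) (hδ : 0 < δ) (t : ℝ) :
    (∫ r in t..(t + δ), g r) ^ p ≤ δ ^ (p - 1) * ∫ r in t..(t + δ), g r ^ p := by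
  have hle : t ≤ t + δ := by linarith
  haveI : IsFiniteMeasure (volume.restrict (Set.Ioc t (t + δ))) :=
    ⟨by rw [Measure.restrict_apply_univ]; exact measure_Ioc_lt_top⟩
  have hmeas : AEStronglyMeasurable g (volume.restrict (Set.Ioc t (t + δ))) :=
    hg.aestronglyMeasurable
  obtain ⟨M, hM⟩ := (isCompact_Icc (a := t) (b := t + δ)).exists_bound_of_continuousOn
    hg.continuousOn
  have hbound : ∀ᵐ x ∂(volume.restrict (Set.Ioc t (t + δ))), ‖g x‖ ≤ M := by
    filter_upwards [ae_restrict_mem measurableSet_Ioc] with x hx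
    exact hM x (Set.Ioc_subset_Icc_self hx)
  have hmem : MemLp g (ENNReal.ofReal p) (volume.restrict (Set.Ioc t (t + δ))) :=
    MemLp.of_bound hmeas M hbound
  have hmem1 : MemLp (fun _ : ℝ => (1:ℝ)) (ENNReal.ofReal q) (volume.restrict (Set.Ioc t (t + δ))) :=
    memLp_const 1
  have H := integral_mul_le_Lp_mul_Lq_of_nonneg (μ := volume.restrict (Set.Ioc t (t + δ))) hpq
    (Filter.Eventually.of_forall fun x => hgn x)
    (Filter.Eventually.of_forall fun _ => zero_le_one) hmem hmem1
  simp only [mul_one, Real.one_rpow] at H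
  have hvol : ∫ _ in Set.Ioc t (t + δ), (1:ℝ) = δ := by
    simp [Real.volume_Ioc, hδ.le]
  rw [hvol] at H
  have h1 : ∫ r in t..(t + δ), g r = ∫ r in Set.Ioc t (t + δ), g r :=
    intervalIntegral.integral_of_le hle
  have h2 : ∫ r in t..(t + δ), g r ^ p = ∫ r in Set.Ioc t (t + δ), g r ^ p :=
    intervalIntegral.integral_of_le hle
  rw [h1, h2]
  have hint_nonneg : 0 ≤ ∫ r in Set.Ioc t (t + δ), g r ^ p :=
    integral_nonneg fun r => Real.rpow_nonneg (hgn r) p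
  calc (∫ r in Set.Ioc t (t + δ), g r) ^ p
      ≤ ((∫ r in Set.Ioc t (t + δ), g r ^ p) ^ (1/p) * δ ^ (1/q)) ^ p := by
        apply Real.rpow_le_rpow (integral_nonneg fun r => hgn r) H hpq.nonneg
    _ = δ ^ (p - 1) * ∫ r in Set.Ioc t (t + δ), g r ^ p := by
        have hp0 : p ≠ 0 := hpq.pos.ne'
        have hqinv : 1/q = 1 - 1/p := by
          have h := hpq.inv_add_inv_eq_one; simp only [one_div]; linarith
        have hqp : (1/q) * p = p - 1 := by
          rw [hqinv, sub_mul, one_mul, one_div, inv_mul_cancel₀ hp0]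
        rw [Real.mul_rpow (Real.rpow_nonneg hint_nonneg _) (Real.rpow_nonneg hδ.le _),
          ← Real.rpow_mul hint_nonneg, ← Real.rpow_mul hδ.le, hqp,
          one_div_mul_cancel hp0, Real.rpow_one, mul_comm]

lemma fubini_shift (G : ℝ → ℝ) (hG : Continuous G) (hGp : Function.Periodic G 1)
    (δ : ℝ) (hδ : 0 < δ) :
    ∫ t in Set.Ioc (0:ℝ) 1, (∫ r in t..(t + δ), G r) = δ * ∫ t in Set.Ioc (0:ℝ) 1, G t := by
  have step1 : ∀ t : ℝ, ∫ r in t..(t + δ), G r = ∫ u in Set.Ioc (0:ℝ) δ, G (u + t) := by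
    intro t
    calc ∫ r in t..(t + δ), G r = ∫ x in (0+t)..(δ+t), G x := by rw [zero_add, add_comm t δ]
      _ = ∫ u in (0:ℝ)..δ, G (u + t) := (intervalIntegral.integral_comp_add_right G t).symm
      _ = ∫ u in Set.Ioc (0:ℝ) δ, G (u + t) := intervalIntegral.integral_of_le hδ.le
  simp only [step1]
  have hint : Integrable (Function.uncurry fun t u => G (u + t))
      ((volume.restrict (Set.Ioc (0:ℝ) 1)).prod (volume.restrict (Set.Ioc (0:ℝ) δ))) := by
    rw [Measure.prod_restrict, ← Measure.volume_eq_prod]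
    have hc : Continuous (Function.uncurry fun (t u : ℝ) => G (u + t)) := by
      apply hG.comp; exact continuous_snd.add continuous_fst
    refine IntegrableOn.mono_set ?_
      (Set.prod_mono Set.Ioc_subset_Icc_self Set.Ioc_subset_Icc_self)
    exact hc.continuousOn.integrableOn_compact (isCompact_Icc.prod isCompact_Icc)
  rw [MeasureTheory.integral_integral_swap hint]
  have inner : ∀ u : ℝ, ∫ t in Set.Ioc (0:ℝ) 1, G (u + t) = ∫ t in Set.Ioc (0:ℝ) 1, G t := by
    intro u
    simp only [fun t => add_comm u t]
    exact shift_integral G hGp u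
  simp only [inner]
  rw [setIntegral_const, smul_eq_mul, Real.volume_real_Ioc]
  simp [hδ.le]

end helpers

/-- Interpolation estimate for the first derivative of a smooth `1`-periodic loop:
`‖ξ'‖_p ≤ κ_p (δ⁻¹ ‖ξ‖_p + δ ‖ξ''‖_p)` for every `δ > 0`. -/
theorem statement11 (p : ℝ) (hp : 1 < p) (n : ℕ) (hn : 0 < n) (δ : ℝ) (hδ : 0 < δ)
    (ξ : ℝ → EuclideanSpace ℝ (Fin n))
    (hξ : ContDiff ℝ (⊤ : ℕ∞) ξ) (hpξ : Function.Periodic ξ 1) :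
    loopNorm p (deriv ξ) ≤
      kappa p * (δ⁻¹ * loopNorm p ξ + δ * loopNorm p (deriv (deriv ξ))) := by
  have hp0 : (0:ℝ) < p := by linarith
  set μ := volume.restrict (Set.Ioc (0:ℝ) 1) with hμ
  set P := ENNReal.ofReal p with hP
  have hP1 : (1:ENNReal) ≤ P := by
    rw [hP, ← ENNReal.ofReal_one]
    exact ENNReal.ofReal_le_ofReal hp.le
  -- smoothness facts
  have hξ1 : ContDiff ℝ (⊤ : ℕ∞) (deriv ξ) := (contDiff_infty_iff_deriv.mp hξ).2
  have hξc : Continuous ξ := hξ.continuous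
  have hξ1c : Continuous (deriv ξ) := hξ1.continuous
  have hξ2c : Continuous (deriv (deriv ξ)) := (contDiff_infty_iff_deriv.mp hξ1).2.continuous
  -- periodicity facts
  have hpξ1 : Function.Periodic (deriv ξ) 1 := periodic_deriv ξ hpξ
  have hpξ2 : Function.Periodic (deriv (deriv ξ)) 1 := periodic_deriv _ hpξ1
  -- the three pieces
  set f1 : ℝ → EuclideanSpace ℝ (Fin n) := fun t => δ⁻¹ • ξ (t + δ) with hf1
  set f2 : ℝ → EuclideanSpace ℝ (Fin n) := fun t => δ⁻¹ • ξ t with hf2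
  set f3 : ℝ → EuclideanSpace ℝ (Fin n) :=
    fun t => δ⁻¹ • ∫ r in t..(t + δ), (t + δ - r) • deriv (deriv ξ) r with hf3
  set g : ℝ → ℝ := fun r => ‖deriv (deriv ξ) r‖ with hg
  set c : ℝ → ℝ := fun t => ∫ r in t..(t + δ), g r with hc
  have hgc : Continuous g := hξ2c.norm
  have hgn : ∀ r, 0 ≤ g r := fun r => norm_nonneg _
  have hgp : Function.Periodic g 1 := fun t => by simp [hg, hpξ2 t]
  have hcc : Continuous c := cont_slide g hgc δ
  have hcn : ∀ t, 0 ≤ c t := fun t =>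
    intervalIntegral.integral_nonneg (by linarith) (fun r _ => hgn r)
  have hf1c : Continuous f1 := (hξc.comp (continuous_add_right δ)).const_smul δ⁻¹
  have hf2c : Continuous f2 := hξc.const_smul δ⁻¹
  have hrepr : ∀ t, deriv ξ t = f1 t - f2 t - f3 t := fun t => deriv_repr ξ hξ δ hδ t
  have hf3c : Continuous f3 := by
    have : f3 = fun t => f1 t - f2 t - deriv ξ t := by
      funext t; rw [hrepr t]; abel
    rw [this]
    exact (hf1c.sub hf2c).sub hξ1c
  -- pointwise bound on f3 by c
  have hf3b : ∀ t, ‖f3 t‖ ≤ c t := by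
    intro t
    have hle : t ≤ t + δ := by linarith
    have hR : ‖∫ r in t..(t + δ), (t + δ - r) • deriv (deriv ξ) r‖ ≤ δ * c t := by
      calc ‖∫ r in t..(t + δ), (t + δ - r) • deriv (deriv ξ) r‖
          ≤ ∫ r in t..(t + δ), ‖(t + δ - r) • deriv (deriv ξ) r‖ :=
            intervalIntegral.norm_integral_le_integral_norm hle
        _ ≤ ∫ r in t..(t + δ), δ * g r := by
            apply intervalIntegral.integral_mono_on hle
              ((by fun_prop : Continuous fun r => ‖(t + δ - r) • deriv (deriv ξ) r‖).intervalIntegrable _ _)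
              ((by fun_prop : Continuous fun r => δ * g r).intervalIntegrable _ _)
            intro r hr
            rw [norm_smul]
            apply mul_le_mul_of_nonneg_right _ (hgn r)
            rw [Real.norm_eq_abs, abs_le]
            constructor <;> [linarith [hr.1, hr.2]; linarith [hr.1, hr.2]]
        _ = δ * c t := by rw [hc]; exact intervalIntegral.integral_const_mul δ g
    calc ‖f3 t‖ = δ⁻¹ * ‖∫ r in t..(t + δ), (t + δ - r) • deriv (deriv ξ) r‖ := by
          rw [hf3, norm_smul, Real.norm_eq_abs, abs_of_pos (inv_pos.mpr hδ)]
      _ ≤ δ⁻¹ * (δ * c t) := mul_le_mul_of_nonneg_left hR (by positivity)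
      _ = c t := by field_simp
  -- triangle inequality at the eLpNorm level
  have htri : eLpNorm (deriv ξ) P μ ≤ eLpNorm f1 P μ + eLpNorm f2 P μ + eLpNorm c P μ := by
    have h0 : eLpNorm (deriv ξ) P μ = eLpNorm (fun t => (f1 t - f2 t) - f3 t) P μ := by
      congr 1; funext t; rw [hrepr t]
    rw [h0]
    calc eLpNorm (fun t => (f1 t - f2 t) - f3 t) P μ
        ≤ eLpNorm (fun t => f1 t - f2 t) P μ + eLpNorm f3 P μ :=
          eLpNorm_sub_le ((hf1c.sub hf2c).aestronglyMeasurable) hf3c.aestronglyMeasurable hP1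
      _ ≤ (eLpNorm f1 P μ + eLpNorm f2 P μ) + eLpNorm f3 P μ := by
          gcongr
          exact eLpNorm_sub_le hf1c.aestronglyMeasurable hf2c.aestronglyMeasurable hP1
      _ ≤ eLpNorm f1 P μ + eLpNorm f2 P μ + eLpNorm c P μ := by
          gcongr
          exact eLpNorm_mono_real fun t => hf3b t
  -- finiteness
  have hfin1 : eLpNorm f1 P μ < ⊤ := eLp_lt_top p f1 hf1c
  have hfin2 : eLpNorm f2 P μ < ⊤ := eLp_lt_top p f2 hf2c
  have hfinc : eLpNorm c P μ < ⊤ := eLp_lt_top p c hcc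
  -- convert to real numbers
  have hmain : loopNorm p (deriv ξ) ≤
      (eLpNorm f1 P μ).toReal + (eLpNorm f2 P μ).toReal + (eLpNorm c P μ).toReal := by
    have h1 : loopNorm p (deriv ξ) = (eLpNorm (deriv ξ) P μ).toReal :=
      (eLp_toReal p hp0 _ hξ1c.aestronglyMeasurable).symm
    have h12 : eLpNorm f1 P μ + eLpNorm f2 P μ ≠ ⊤ :=
      (ENNReal.add_lt_top.mpr ⟨hfin1, hfin2⟩).ne
    have h123 : eLpNorm f1 P μ + eLpNorm f2 P μ + eLpNorm c P μ ≠ ⊤ :=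
      (ENNReal.add_lt_top.mpr ⟨ENNReal.add_lt_top.mpr ⟨hfin1, hfin2⟩, hfinc⟩).ne
    rw [h1, ← ENNReal.toReal_add hfin1.ne hfin2.ne, ← ENNReal.toReal_add h12 hfinc.ne]
    exact ENNReal.toReal_mono h123 htri
  -- compute the first two terms
  have hGper : Function.Periodic (fun s => ‖ξ s‖ ^ p) 1 := fun t => by simp [hpξ t]
  have hshift : ∫ t in Set.Ioc (0:ℝ) 1, ‖ξ (t + δ)‖ ^ p = ∫ t in Set.Ioc (0:ℝ) 1, ‖ξ t‖ ^ p :=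
    shift_integral (fun s => ‖ξ s‖ ^ p) hGper δ
  have hsmul_int : ∀ (h : ℝ → EuclideanSpace ℝ (Fin n)),
      (∫ t in Set.Ioc (0:ℝ) 1, ‖δ⁻¹ • h t‖ ^ p) = δ⁻¹ ^ p * ∫ t in Set.Ioc (0:ℝ) 1, ‖h t‖ ^ p := by
    intro h
    rw [← integral_const_mul]
    congr 1; funext t
    rw [norm_smul, Real.norm_eq_abs, abs_of_pos (inv_pos.mpr hδ),
      Real.mul_rpow (by positivity) (norm_nonneg _)]
  have hA : 0 ≤ ∫ t in Set.Ioc (0:ℝ) 1, ‖ξ t‖ ^ p :=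
    integral_nonneg fun t => Real.rpow_nonneg (norm_nonneg _) _
  have hpow_pull : ∀ x : ℝ, 0 ≤ x → (δ⁻¹ ^ p * x) ^ (1/p) = δ⁻¹ * x ^ (1/p) := by
    intro x hx
    rw [Real.mul_rpow (by positivity) hx, ← Real.rpow_mul (by positivity),
      mul_one_div_cancel hp0.ne', Real.rpow_one]
  have hT1 : (eLpNorm f1 P μ).toReal = δ⁻¹ * loopNorm p ξ := by
    rw [eLp_toReal p hp0 f1 hf1c.aestronglyMeasurable, hf1]
    simp only
    rw [hsmul_int (fun t => ξ (t + δ)), hshift, hpow_pull _ hA]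
    rfl
  have hT2 : (eLpNorm f2 P μ).toReal = δ⁻¹ * loopNorm p ξ := by
    rw [eLp_toReal p hp0 f2 hf2c.aestronglyMeasurable, hf2]
    simp only
    rw [hsmul_int ξ, hpow_pull _ hA]
    rfl
  -- the third term
  have hq : p.HolderConjugate (p / (p - 1)) := Real.HolderConjugate.conjExponent hp
  have hB : 0 ≤ ∫ t in Set.Ioc (0:ℝ) 1, g t ^ p :=
    integral_nonneg fun t => Real.rpow_nonneg (hgn t) _
  have hgpc : Continuous (fun r => g r ^ p) := hgc.rpow_const fun x => Or.inr hp0.le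
  have hT3 : (eLpNorm c P μ).toReal ≤ δ * loopNorm p (deriv (deriv ξ)) := by
    rw [eLp_toReal p hp0 c hcc.aestronglyMeasurable]
    have hcint : ∫ t in Set.Ioc (0:ℝ) 1, ‖c t‖ ^ p ≤ δ ^ p * ∫ t in Set.Ioc (0:ℝ) 1, g t ^ p := by
      have hmono : ∫ t in Set.Ioc (0:ℝ) 1, ‖c t‖ ^ p
          ≤ ∫ t in Set.Ioc (0:ℝ) 1, δ ^ (p - 1) * (∫ r in t..(t + δ), g r ^ p) := by
        apply setIntegral_mono_on
        · exact ((hcc.norm.rpow_const fun x => Or.inr hp0.le).continuousOn.integrableOn_compact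
            isCompact_Icc).mono_set Set.Ioc_subset_Icc_self
        · exact ((continuous_const.mul (cont_slide (fun r => g r ^ p) hgpc δ)).continuousOn.integrableOn_compact
            isCompact_Icc).mono_set Set.Ioc_subset_Icc_self
        · exact measurableSet_Ioc
        · intro t _
          rw [Real.norm_of_nonneg (hcn t)]
          exact pointwise_holder g hgc hgn p (p / (p-1)) hq δ hδ t
      have hfub : ∫ t in Set.Ioc (0:ℝ) 1, (∫ r in t..(t + δ), g r ^ p)
          = δ * ∫ t in Set.Ioc (0:ℝ) 1, g t ^ p :=
        fubini_shift (fun r => g r ^ p) hgpc (fun t => by simp [hgp t]) δ hδ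
      have hδp : δ ^ (p - 1) * δ = δ ^ p := by
        rw [← Real.rpow_add_one hδ.ne' (p - 1), sub_add_cancel]
      calc ∫ t in Set.Ioc (0:ℝ) 1, ‖c t‖ ^ p
          ≤ ∫ t in Set.Ioc (0:ℝ) 1, δ ^ (p - 1) * (∫ r in t..(t + δ), g r ^ p) := hmono
        _ = δ ^ (p - 1) * ∫ t in Set.Ioc (0:ℝ) 1, (∫ r in t..(t + δ), g r ^ p) :=
            integral_const_mul _ _
        _ = δ ^ (p - 1) * (δ * ∫ t in Set.Ioc (0:ℝ) 1, g t ^ p) := by rw [hfub]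
        _ = δ ^ p * ∫ t in Set.Ioc (0:ℝ) 1, g t ^ p := by rw [← mul_assoc, hδp]
    calc (∫ t in Set.Ioc (0:ℝ) 1, ‖c t‖ ^ p) ^ (1/p)
        ≤ (δ ^ p * ∫ t in Set.Ioc (0:ℝ) 1, g t ^ p) ^ (1/p) := by
          apply Real.rpow_le_rpow (integral_nonneg fun t => Real.rpow_nonneg (norm_nonneg _) _)
            hcint (by positivity)
      _ = δ * (∫ t in Set.Ioc (0:ℝ) 1, g t ^ p) ^ (1/p) := by
          rw [Real.mul_rpow (by positivity) hB, ← Real.rpow_mul hδ.le,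
            mul_one_div_cancel hp0.ne', Real.rpow_one]
      _ = δ * loopNorm p (deriv (deriv ξ)) := rfl
  -- kappa ≥ 2
  have hk2 : 2 ≤ kappa p := by
    rw [kappa]
    split_ifs with h
    · exact h
    · push_neg at h
      rw [le_div_iff₀ (by linarith)]
      linarith
  have hln : 0 ≤ loopNorm p ξ := Real.rpow_nonneg hA _
  have hln2 : 0 ≤ loopNorm p (deriv (deriv ξ)) :=
    Real.rpow_nonneg (integral_nonneg fun t => Real.rpow_nonneg (norm_nonneg _) _) _
  calc loopNorm p (deriv ξ)
      ≤ (eLpNorm f1 P μ).toReal + (eLpNorm f2 P μ).toReal + (eLpNorm c P μ).toReal := hmain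
    _ ≤ δ⁻¹ * loopNorm p ξ + δ⁻¹ * loopNorm p ξ + δ * loopNorm p (deriv (deriv ξ)) := by
        rw [hT1, hT2]; linarith [hT3]
    _ ≤ kappa p * (δ⁻¹ * loopNorm p ξ + δ * loopNorm p (deriv (deriv ξ))) := by
        have h1 : 0 ≤ δ⁻¹ * loopNorm p ξ := by positivity
        have h2 : 0 ≤ δ * loopNorm p (deriv (deriv ξ)) := by positivity
        nlinarith
end

section
/- For every real number p > 2 and every positive integer n there is a constant c > 0 such that the following holds for every ε ∈ (0,1] and every pair of nonnegative real numbers β₁ and β₂. If ξ : ℝ² → ℝⁿ is a C¹ function that is 1-periodic in the second variable t and vanishes outside a set of the form [−T,T] × ℝ, then sup_{(s,t) ∈ ℝ²} |ξ(s,t)| ≤ c ε^{−(β₁+β₂)/p} ( ‖ξ‖_p + ε^{β₁} ‖∂_t ξ‖_p + ε^{β₂} ‖∂_s ξ‖_p ). -/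
open MeasureTheory Set

set_option maxHeartbeats 1000000

section Helpers
variable {F : Type*} [NormedAddCommGroup F] [NormedSpace ℝ F]

lemma rectIntegrable {f : ℝ × ℝ → F} (hf : Continuous f) (α α' β β' : ℝ) :
    IntegrableOn f (Ioc α α' ×ˢ Ioc β β') := by
  have : IntegrableOn f (Icc α α' ×ˢ Icc β β') :=
    hf.continuousOn.integrableOn_compact (isCompact_Icc.prod isCompact_Icc)
  exact this.mono_set (prod_mono Ioc_subset_Icc_self Ioc_subset_Icc_self)

lemma stripIntegrable {f : ℝ × ℝ → F} (hf : Continuous f) {T : ℝ}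
    (hT : ∀ q : ℝ × ℝ, T < |q.1| → f q = 0) (c d : ℝ) :
    IntegrableOn f (univ ×ˢ Ioc c d) := by
  set B : Set (ℝ × ℝ) := Ioc (-(|T|+1)) (|T|+1) ×ˢ Ioc c d with hB
  have h1 : IntegrableOn f B := rectIntegrable hf _ _ _ _
  have h2 : IntegrableOn f ((univ ×ˢ Ioc c d) \ B) := by
    apply integrableOn_zero.congr_fun _ (by measurability)
    rintro ⟨s, t⟩ ⟨⟨-, ht⟩, hs⟩
    refine (hT _ ?_).symm
    have hs' : s ∉ Ioc (-(|T|+1)) (|T|+1) := by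
      intro hmem
      exact hs ⟨hmem, ht⟩
    simp only [mem_Ioc, not_and_or, not_lt, not_le] at hs'
    have hTle : T ≤ |T| := le_abs_self T
    rcases hs' with h | h
    · calc T ≤ |T| := hTle
        _ < |T| + 1 := by linarith
        _ ≤ |s| := by nlinarith [neg_abs_le s, le_abs_self s, abs_nonneg s]
    · calc T ≤ |T| := hTle
        _ < |T| + 1 := by linarith
        _ ≤ |s| := le_trans h.le (le_abs_self s)
  have := h1.union h2
  exact this.mono_set (fun x hx => by
    by_cases h : x ∈ B
    · exact Or.inl h
    · exact Or.inr ⟨hx, h⟩)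

lemma strip_fubini {f : ℝ × ℝ → ℝ} (c d : ℝ)
    (hi : IntegrableOn f (univ ×ˢ Ioc c d)) :
    ∫ x in univ ×ˢ Ioc c d, f x = ∫ s : ℝ, ∫ t in Ioc c d, f (s, t) := by
  have hm : (volume : Measure (ℝ × ℝ)).restrict (univ ×ˢ Ioc c d)
      = (volume : Measure ℝ).prod ((volume : Measure ℝ).restrict (Ioc c d)) := by
    rw [Measure.volume_eq_prod, ← Measure.prod_restrict, Measure.restrict_univ]
  rw [IntegrableOn, hm] at hi
  rw [setIntegral_congr_set (by rfl), show ((volume : Measure (ℝ × ℝ)).restrict (univ ×ˢ Ioc c d)) = _ from hm]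
  exact integral_prod f hi

lemma stripPeriodic {f : ℝ × ℝ → ℝ} (hf : Continuous f) {T : ℝ}
    (hT : ∀ q : ℝ × ℝ, T < |q.1| → f q = 0)
    (hper : ∀ s t : ℝ, f (s, t + 1) = f (s, t)) (c : ℝ) :
    ∫ x in univ ×ˢ Ioc c (c+1), f x = ∫ x in univ ×ˢ Ioc 0 1, f x := by
  rw [strip_fubini c (c+1) (stripIntegrable hf hT c (c+1)),
      strip_fubini 0 1 (stripIntegrable hf hT 0 1)]
  congr 1
  funext s
  have hper' : Function.Periodic (fun t => f (s, t)) 1 := fun t => hper s t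
  have h1 : ∫ t in Ioc c (c+1), f (s, t) = ∫ t in c..(c+1), f (s, t) :=
    (intervalIntegral.integral_of_le (by linarith)).symm
  have h2 : ∫ t in Ioc (0:ℝ) 1, f (s, t) = ∫ t in (0:ℝ)..1, f (s, t) :=
    (intervalIntegral.integral_of_le (by linarith)).symm
  rw [h1, h2]
  simpa using hper'.intervalIntegral_add_eq c 0

lemma rect_fubini {f : ℝ × ℝ → ℝ} (hf : Continuous f) (α α' β β' : ℝ) :
    ∫ x in Ioc α α' ×ˢ Ioc β β', f x = ∫ s in Ioc α α', ∫ t in Ioc β β', f (s, t) := by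
  have hm : (volume : Measure (ℝ × ℝ)).restrict (Ioc α α' ×ˢ Ioc β β')
      = ((volume : Measure ℝ).restrict (Ioc α α')).prod
        ((volume : Measure ℝ).restrict (Ioc β β')) := by
    rw [Measure.volume_eq_prod, Measure.prod_restrict]
  have hi : IntegrableOn f (Ioc α α' ×ˢ Ioc β β') := rectIntegrable hf _ _ _ _
  rw [IntegrableOn, hm] at hi
  rw [show ((volume : Measure (ℝ × ℝ)).restrict (Ioc α α' ×ˢ Ioc β β')) = _ from hm]
  exact integral_prod f hi

lemma Ioc_comp_mul_add (f : ℝ → ℝ) {r : ℝ} (hr : 0 < r) (β : ℝ) {b : ℝ} (hb : 0 ≤ b) :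
    ∫ t in Ioc β (β+b), f (β + r*(t-β)) = r⁻¹ * ∫ t in Ioc β (β+r*b), f t := by
  have e1 : ∀ t : ℝ, β + r*(t-β) = r * t + (β - r*β) := by intro t; ring
  rw [← intervalIntegral.integral_of_le (by linarith : β ≤ β + b),
      ← intervalIntegral.integral_of_le (by nlinarith : β ≤ β + r*b)]
  simp only [e1]
  rw [intervalIntegral.integral_comp_mul_add f hr.ne' (β - r*β),
      show r * β + (β - r*β) = β by ring, show r * (β+b) + (β - r*β) = β + r*b by ring,
      smul_eq_mul]

lemma rectCoV {h : ℝ × ℝ → ℝ} (hh : Continuous h) {r a b α β : ℝ}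
    (hr : 0 < r) (ha : 0 ≤ a) (hb : 0 ≤ b) :
    ∫ x in Ioc α (α+a) ×ˢ Ioc β (β+b), h (α + r*(x.1-α), β + r*(x.2-β))
      = (r*r)⁻¹ * ∫ y in Ioc α (α+r*a) ×ˢ Ioc β (β+r*b), h y := by
  have hc : Continuous fun x : ℝ × ℝ => h (α + r*(x.1-α), β + r*(x.2-β)) := by
    apply hh.comp; continuity
  rw [rect_fubini hc, rect_fubini hh]
  calc ∫ s in Ioc α (α+a), ∫ t in Ioc β (β+b), h (α + r*(s-α), β + r*(t-β))
      = ∫ s in Ioc α (α+a), r⁻¹ * ∫ t in Ioc β (β+r*b), h (α + r*(s-α), t) := by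
        refine setIntegral_congr_fun measurableSet_Ioc (fun s _ => ?_)
        exact Ioc_comp_mul_add (fun t => h (α + r*(s-α), t)) hr β hb
    _ = r⁻¹ * ∫ s in Ioc α (α+a), (fun u => ∫ t in Ioc β (β+r*b), h (u, t)) (α + r*(s-α)) := by
        rw [← integral_const_mul]
    _ = r⁻¹ * (r⁻¹ * ∫ u in Ioc α (α+r*a), ∫ t in Ioc β (β+r*b), h (u, t)) := by
        rw [Ioc_comp_mul_add (fun u => ∫ t in Ioc β (β+r*b), h (u, t)) hr α ha]
    _ = (r*r)⁻¹ * ∫ s in Ioc α (α+r*a), ∫ t in Ioc β (β+r*b), h (s, t) := by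
        rw [mul_inv]; ring

lemma volRect (α α' β β' : ℝ) :
    volume (Ioc α α' ×ˢ Ioc β β' : Set (ℝ × ℝ))
      = ENNReal.ofReal (α' - α) * ENNReal.ofReal (β' - β) := by
  rw [Measure.volume_eq_prod, Measure.prod_prod, Real.volume_Ioc, Real.volume_Ioc]

lemma holderRect {f : ℝ × ℝ → ℝ} (hf : Continuous f) (hnn : ∀ x, 0 ≤ f x)
    {p q : ℝ} (hpq : Real.HolderConjugate p q) (α α' β β' : ℝ) :
    ∫ x in Ioc α α' ×ˢ Ioc β β', f x
      ≤ ((volume (Ioc α α' ×ˢ Ioc β β' : Set (ℝ × ℝ))).toReal) ^ (1/q)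
        * (∫ x in Ioc α α' ×ˢ Ioc β β', f x ^ p) ^ (1/p) := by
  set R : Set (ℝ × ℝ) := Ioc α α' ×ˢ Ioc β β' with hR
  have hRm : MeasurableSet R := (measurableSet_Ioc.prod measurableSet_Ioc)
  have hvol : volume R ≠ ⊤ := by
    rw [hR, volRect]; exact ENNReal.mul_ne_top ENNReal.ofReal_ne_top ENNReal.ofReal_ne_top
  haveI : IsFiniteMeasure (volume.restrict R) := by
    constructor; rw [Measure.restrict_apply_univ]; exact hvol.lt_top
  obtain ⟨C, hC⟩ : ∃ C, ∀ x ∈ (Icc α α' ×ˢ Icc β β' : Set (ℝ × ℝ)), ‖f x‖ ≤ C :=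
    (isCompact_Icc.prod isCompact_Icc).exists_bound_of_continuousOn hf.continuousOn
  have hmem : MemLp f (ENNReal.ofReal p) (volume.restrict R) := by
    refine MemLp.of_bound hf.aestronglyMeasurable.restrict C ?_
    filter_upwards [ae_restrict_mem hRm] with x hx
    exact hC x (prod_mono Ioc_subset_Icc_self Ioc_subset_Icc_self hx)
  have hmem1 : MemLp (fun _ : ℝ × ℝ => (1:ℝ)) (ENNReal.ofReal q) (volume.restrict R) :=
    memLp_const 1
  have h := integral_mul_le_Lp_mul_Lq_of_nonneg hpq
    (Filter.Eventually.of_forall hnn) (Filter.Eventually.of_forall fun _ => zero_le_one)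
    hmem hmem1 (μ := volume.restrict R)
  simp only [mul_one, Real.one_rpow] at h
  calc ∫ x in R, f x ≤ (∫ x in R, f x ^ p) ^ (1/p) * (∫ _ in R, (1:ℝ)) ^ (1/q) := h
    _ = ((volume R).toReal) ^ (1/q) * (∫ x in R, f x ^ p) ^ (1/p) := by
        rw [setIntegral_const, smul_eq_mul, mul_one, mul_comm, measureReal_def]

lemma ftcSegment {E : Type*} [NormedAddCommGroup E] [NormedSpace ℝ E] [CompleteSpace E]
    {ξ : ℝ × ℝ → E} (hξ : ContDiff ℝ 1 ξ) (q x : ℝ × ℝ) :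
    ‖ξ q‖ ≤ ‖ξ x‖ + ∫ r in (0:ℝ)..1, ‖fderiv ℝ ξ (q + r • (x - q)) (x - q)‖ := by
  set v : ℝ × ℝ := x - q with hv
  have hline : ∀ r : ℝ, HasDerivAt (fun r : ℝ => q + r • v) v r := by
    intro r
    simpa using ((hasDerivAt_id r).smul_const v).const_add q
  have hd : ∀ r : ℝ, HasDerivAt (fun r : ℝ => ξ (q + r • v)) (fderiv ℝ ξ (q + r • v) v) r := by
    intro r
    exact ((hξ.differentiable one_ne_zero (q + r • v)).hasFDerivAt).comp_hasDerivAt r (hline r)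
  have hcont : Continuous fun r : ℝ => fderiv ℝ ξ (q + r • v) v := by
    have h1 : Continuous fun r : ℝ => fderiv ℝ ξ (q + r • v) :=
      (hξ.continuous_fderiv one_ne_zero).comp (by continuity)
    exact h1.clm_apply continuous_const
  have key : ∫ r in (0:ℝ)..1, fderiv ℝ ξ (q + r • v) v = ξ x - ξ q := by
    rw [intervalIntegral.integral_eq_sub_of_hasDerivAt (fun r _ => hd r)
      (hcont.intervalIntegrable 0 1)]
    simp [hv]
  have h2 : ξ q = ξ x - ∫ r in (0:ℝ)..1, fderiv ℝ ξ (q + r • v) v := by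
    rw [key]; abel
  calc ‖ξ q‖ = ‖ξ x - ∫ r in (0:ℝ)..1, fderiv ℝ ξ (q + r • v) v‖ := by rw [← h2]
    _ ≤ ‖ξ x‖ + ‖∫ r in (0:ℝ)..1, fderiv ℝ ξ (q + r • v) v‖ := norm_sub_le _ _
    _ ≤ ‖ξ x‖ + ∫ r in (0:ℝ)..1, ‖fderiv ℝ ξ (q + r • v) v‖ := by
        gcongr
        exact intervalIntegral.norm_integral_le_integral_norm zero_le_one

lemma fderivVanish {E : Type*} [NormedAddCommGroup E] [NormedSpace ℝ E]
    {ξ : ℝ × ℝ → E} {T : ℝ} (hT : ∀ q : ℝ × ℝ, T < |q.1| → ξ q = 0) :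
    ∀ q : ℝ × ℝ, T < |q.1| → fderiv ℝ ξ q = 0 := by
  intro q hq
  have hopen : IsOpen {x : ℝ × ℝ | T < |x.1|} :=
    isOpen_lt continuous_const (continuous_abs.comp continuous_fst)
  have hev : ξ =ᶠ[nhds q] (fun _ => (0 : E)) :=
    Filter.eventuallyEq_of_mem (hopen.mem_nhds hq) (fun x hx => hT x hx)
  rw [hev.fderiv_eq, fderiv_fun_const]
  rfl

lemma fderivPeriodic {E : Type*} [NormedAddCommGroup E] [NormedSpace ℝ E]
    {ξ : ℝ × ℝ → E} (hξ : ContDiff ℝ 1 ξ)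
    (hper : ∀ s t : ℝ, ξ (s, t + 1) = ξ (s, t)) :
    ∀ s t : ℝ, fderiv ℝ ξ (s, t + 1) = fderiv ℝ ξ (s, t) := by
  intro s t
  have heq : (fun q : ℝ × ℝ => ξ (q + ((0:ℝ), (1:ℝ)))) = ξ := by
    funext q
    have : q + ((0:ℝ), (1:ℝ)) = (q.1, q.2 + 1) := by
      ext <;> simp
    rw [this]
    exact hper q.1 q.2
  have htr : HasFDerivAt (fun q : ℝ × ℝ => q + ((0:ℝ), (1:ℝ)))
      (ContinuousLinearMap.id ℝ (ℝ × ℝ)) (s, t) := (hasFDerivAt_id _).add_const _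
  have hfd : HasFDerivAt (fun q : ℝ × ℝ => ξ (q + ((0:ℝ), (1:ℝ))))
      (fderiv ℝ ξ ((s, t) + ((0:ℝ), (1:ℝ)))) (s, t) := by
    have := ((hξ.differentiable one_ne_zero _).hasFDerivAt).comp (s, t) htr
    simpa [Function.comp_def] using this
  have h2 := hfd.fderiv
  rw [heq] at h2
  have h3 : ((s, t) : ℝ × ℝ) + ((0:ℝ), (1:ℝ)) = (s, t + 1) := by ext <;> simp
  rw [h3] at h2
  exact h2.symm

end Helpers


/-- The `L^p` norm on the cylinder `ℝ × S¹`,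
`‖f‖_p = (∫_ℝ ∫₀¹ |f(s,t)|^p dt ds)^{1/p}`, for functions on `ℝ²` that are
`1`-periodic in the second variable. -/
noncomputable def cylNorm (p : ℝ) {n : ℕ} (f : ℝ × ℝ → EuclideanSpace ℝ (Fin n)) : ℝ :=
  (∫ q in (Set.univ ×ˢ Set.Ioc (0 : ℝ) 1 : Set (ℝ × ℝ)), ‖f q‖ ^ p) ^ (1 / p)

/-- Anisotropic Sobolev inequality with `ε`-weights on the cylinder: for `p > 2` there is a
constant `c > 0` such that for all `ε ∈ (0,1]`, all `β₁, β₂ ≥ 0`, and every `C¹` function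
`ξ : ℝ² → ℝⁿ` that is `1`-periodic in `t` and vanishes outside a set `[−T,T] × ℝ`,
`sup |ξ| ≤ c ε^{−(β₁+β₂)/p} (‖ξ‖_p + ε^{β₁} ‖∂ₜξ‖_p + ε^{β₂} ‖∂ₛξ‖_p)`
(stated pointwise, which is equivalent). -/
theorem statement12 (p : ℝ) (hp : 2 < p) (n : ℕ) (hn : 0 < n) :
    ∃ c : ℝ, 0 < c ∧
      ∀ ε ∈ Set.Ioc (0 : ℝ) 1, ∀ β₁ : ℝ, 0 ≤ β₁ → ∀ β₂ : ℝ, 0 ≤ β₂ →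
      ∀ ξ : ℝ × ℝ → EuclideanSpace ℝ (Fin n),
        ContDiff ℝ 1 ξ →
        (∀ s t : ℝ, ξ (s, t + 1) = ξ (s, t)) →
        (∃ T : ℝ, ∀ q : ℝ × ℝ, T < |q.1| → ξ q = 0) →
        ∀ q : ℝ × ℝ,
          ‖ξ q‖ ≤ c * ε ^ (-(β₁ + β₂) / p) *
            (cylNorm p ξ + ε ^ β₁ * cylNorm p (fun x => fderiv ℝ ξ x (0, 1)) +
              ε ^ β₂ * cylNorm p (fun x => fderiv ℝ ξ x (1, 0))) := by
  have hp0 : (0:ℝ) < p := by linarith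
  have hp1 : (1:ℝ) < p := by linarith
  have h2p : 2/p < 1 := by rw [div_lt_one hp0]; linarith
  have h2p0 : 0 < 2/p := by positivity
  set K : ℝ := (1 - 2/p)⁻¹ with hKdef
  have hK0 : 0 < K := by rw [hKdef]; exact inv_pos.2 (by linarith)
  refine ⟨1 + K, by linarith, ?_⟩
  rintro ε ⟨hε0, hε1⟩ β₁ hβ₁ β₂ hβ₂ ξ hξ hper ⟨T, hT⟩ q
  obtain ⟨s₀, t₀⟩ := q
  -- conjugate exponent
  set pc : ℝ := p / (p - 1) with hpcdef
  have hpq : p.HolderConjugate pc := Real.HolderConjugate.conjExponent hp1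
  have hpc : 1/pc = 1 - 1/p := by
    rw [hpcdef]; field_simp
  -- sides of the rectangle
  set a : ℝ := ε ^ β₂ with hadef
  set b : ℝ := ε ^ β₁ with hbdef
  have ha0 : 0 < a := Real.rpow_pos_of_pos hε0 _
  have hb0 : 0 < b := Real.rpow_pos_of_pos hε0 _
  have ha1 : a ≤ 1 := Real.rpow_le_one hε0.le hε1 hβ₂
  have hb1 : b ≤ 1 := Real.rpow_le_one hε0.le hε1 hβ₁
  set R : Set (ℝ × ℝ) := Ioc s₀ (s₀+a) ×ˢ Ioc t₀ (t₀+b) with hRdef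
  have hRvol : volume R = ENNReal.ofReal a * ENNReal.ofReal b := by
    rw [hRdef, volRect]; congr 1 <;> ring_nf
  have hRvolR : (volume R).toReal = a * b := by
    rw [hRvol, ENNReal.toReal_mul, ENNReal.toReal_ofReal ha0.le, ENNReal.toReal_ofReal hb0.le]
  have hRvolfin : volume R ≠ ⊤ := by
    rw [hRvol]; exact ENNReal.mul_ne_top ENNReal.ofReal_ne_top ENNReal.ofReal_ne_top
  -- derivative norms
  have hDc : Continuous (fderiv ℝ ξ) := hξ.continuous_fderiv one_ne_zero
  set g₁ : ℝ × ℝ → ℝ := fun x => ‖fderiv ℝ ξ x ((1:ℝ), (0:ℝ))‖ with hg₁def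
  set g₂ : ℝ × ℝ → ℝ := fun x => ‖fderiv ℝ ξ x ((0:ℝ), (1:ℝ))‖ with hg₂def
  have hg₁c : Continuous g₁ := (hDc.clm_apply continuous_const).norm
  have hg₂c : Continuous g₂ := (hDc.clm_apply continuous_const).norm
  have hg₁T : ∀ x : ℝ × ℝ, T < |x.1| → g₁ x = 0 := by
    intro x hx; rw [hg₁def]; simp [fderivVanish hT x hx]
  have hg₂T : ∀ x : ℝ × ℝ, T < |x.1| → g₂ x = 0 := by
    intro x hx; rw [hg₂def]; simp [fderivVanish hT x hx]
  have hg₁per : ∀ s t : ℝ, g₁ (s, t+1) = g₁ (s, t) := by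
    intro s t; rw [hg₁def]; simp [fderivPeriodic hξ hper s t]
  have hg₂per : ∀ s t : ℝ, g₂ (s, t+1) = g₂ (s, t) := by
    intro s t; rw [hg₂def]; simp [fderivPeriodic hξ hper s t]
  -- p-th power integrands
  have hξpc : Continuous fun x : ℝ × ℝ => ‖ξ x‖ ^ p :=
    hξ.continuous.norm.rpow_const (fun x => Or.inr hp0.le)
  have hg₁pc : Continuous fun x : ℝ × ℝ => g₁ x ^ p :=
    hg₁c.rpow_const (fun x => Or.inr hp0.le)
  have hg₂pc : Continuous fun x : ℝ × ℝ => g₂ x ^ p :=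
    hg₂c.rpow_const (fun x => Or.inr hp0.le)
  have hξpT : ∀ x : ℝ × ℝ, T < |x.1| → ‖ξ x‖ ^ p = 0 := by
    intro x hx; rw [hT x hx]; simp [Real.zero_rpow hp0.ne']
  have hg₁pT : ∀ x : ℝ × ℝ, T < |x.1| → g₁ x ^ p = 0 := by
    intro x hx; rw [hg₁T x hx, Real.zero_rpow hp0.ne']
  have hg₂pT : ∀ x : ℝ × ℝ, T < |x.1| → g₂ x ^ p = 0 := by
    intro x hx; rw [hg₂T x hx, Real.zero_rpow hp0.ne']
  -- cylinder integrals
  set IA : ℝ := ∫ x in (univ ×ˢ Ioc (0:ℝ) 1 : Set (ℝ × ℝ)), ‖ξ x‖ ^ p with hIAdef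
  set IC1 : ℝ := ∫ x in (univ ×ˢ Ioc (0:ℝ) 1 : Set (ℝ × ℝ)), g₁ x ^ p with hIC1def
  set IC2 : ℝ := ∫ x in (univ ×ˢ Ioc (0:ℝ) 1 : Set (ℝ × ℝ)), g₂ x ^ p with hIC2def
  have hIAnn : 0 ≤ IA := setIntegral_nonneg (MeasurableSet.univ.prod measurableSet_Ioc)
    (fun x _ => Real.rpow_nonneg (norm_nonneg _) _)
  have hIC1nn : 0 ≤ IC1 := setIntegral_nonneg (MeasurableSet.univ.prod measurableSet_Ioc)
    (fun x _ => Real.rpow_nonneg (norm_nonneg _) _)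
  have hIC2nn : 0 ≤ IC2 := setIntegral_nonneg (MeasurableSet.univ.prod measurableSet_Ioc)
    (fun x _ => Real.rpow_nonneg (norm_nonneg _) _)
  have hcylA : cylNorm p ξ = IA ^ (1/p) := rfl
  have hcylC2 : cylNorm p (fun x => fderiv ℝ ξ x (0, 1)) = IC2 ^ (1/p) := rfl
  have hcylC1 : cylNorm p (fun x => fderiv ℝ ξ x (1, 0)) = IC1 ^ (1/p) := rfl
  -- the affine contraction and the integrand Ψ
  set Φ : ℝ × ℝ → ℝ → ℝ × ℝ := fun x r => (s₀ + r*(x.1-s₀), t₀ + r*(x.2-t₀)) with hΦdef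
  set Ψ : ℝ × ℝ → ℝ → ℝ := fun x r => a * g₁ (Φ x r) + b * g₂ (Φ x r) with hΨdef
  have hΦc : Continuous (fun z : (ℝ × ℝ) × ℝ => Φ z.1 z.2) := by
    rw [hΦdef]; fun_prop
  have hΨc : Continuous (fun z : (ℝ × ℝ) × ℝ => Ψ z.1 z.2) := by
    rw [hΨdef]
    exact (continuous_const.mul (hg₁c.comp hΦc)).add (continuous_const.mul (hg₂c.comp hΦc))
  have hΨnn : ∀ x r, 0 ≤ Ψ x r := by
    intro x r; rw [hΨdef]
    have := norm_nonneg (fderiv ℝ ξ (Φ x r) ((1:ℝ),(0:ℝ)))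
    have := norm_nonneg (fderiv ℝ ξ (Φ x r) ((0:ℝ),(1:ℝ)))
    positivity
  -- Step 1 : pointwise FTC bound
  have step1 : ∀ x ∈ R, ‖ξ (s₀, t₀)‖ ≤ ‖ξ x‖ + ∫ r in Ioc (0:ℝ) 1, Ψ x r := by
    intro x hx
    obtain ⟨hx1, hx2⟩ := hx
    simp only [mem_Ioc] at hx1 hx2
    refine le_trans (ftcSegment hξ (s₀, t₀) x) ?_
    have hkey : ∀ r : ℝ, ‖fderiv ℝ ξ ((s₀, t₀) + r • (x - (s₀, t₀))) (x - (s₀, t₀))‖ ≤ Ψ x r := by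
      intro r
      have hpt : (s₀, t₀) + r • (x - (s₀, t₀)) = Φ x r := by
        rw [hΦdef]; ext <;> simp <;> ring
      have hdec : x - (s₀, t₀) = (x.1 - s₀) • ((1:ℝ), (0:ℝ)) + (x.2 - t₀) • ((0:ℝ), (1:ℝ)) := by
        ext <;> simp
      rw [hpt, hdec, map_add, _root_.map_smul, _root_.map_smul]
      have h1 : |x.1 - s₀| ≤ a := by
        rw [abs_of_pos (by linarith [hx1.1])]; linarith [hx1.2]
      have h2 : |x.2 - t₀| ≤ b := by
        rw [abs_of_pos (by linarith [hx2.1])]; linarith [hx2.2]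
      calc ‖(x.1 - s₀) • fderiv ℝ ξ (Φ x r) ((1:ℝ), (0:ℝ))
              + (x.2 - t₀) • fderiv ℝ ξ (Φ x r) ((0:ℝ), (1:ℝ))‖
          ≤ ‖(x.1 - s₀) • fderiv ℝ ξ (Φ x r) ((1:ℝ), (0:ℝ))‖
              + ‖(x.2 - t₀) • fderiv ℝ ξ (Φ x r) ((0:ℝ), (1:ℝ))‖ := norm_add_le _ _
        _ = |x.1 - s₀| * ‖fderiv ℝ ξ (Φ x r) ((1:ℝ), (0:ℝ))‖
              + |x.2 - t₀| * ‖fderiv ℝ ξ (Φ x r) ((0:ℝ), (1:ℝ))‖ := by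
            rw [norm_smul, norm_smul, Real.norm_eq_abs, Real.norm_eq_abs]
        _ ≤ a * ‖fderiv ℝ ξ (Φ x r) ((1:ℝ), (0:ℝ))‖
              + b * ‖fderiv ℝ ξ (Φ x r) ((0:ℝ), (1:ℝ))‖ :=
            add_le_add (mul_le_mul_of_nonneg_right h1 (norm_nonneg _))
              (mul_le_mul_of_nonneg_right h2 (norm_nonneg _))
        _ = Ψ x r := rfl
    have hxc : Continuous fun r : ℝ => (s₀, t₀) + r • (x - (s₀, t₀)) :=
      continuous_const.add (continuous_id.smul continuous_const)
    have hnormc : Continuous fun r : ℝ =>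
        ‖fderiv ℝ ξ ((s₀, t₀) + r • (x - (s₀, t₀))) (x - (s₀, t₀))‖ :=
      ((hDc.comp hxc).clm_apply continuous_const).norm
    have hΨxc : Continuous fun r : ℝ => Ψ x r := by
      simp only [hΨdef, hΦdef]
      refine (continuous_const.mul (hg₁c.comp ?_)).add (continuous_const.mul (hg₂c.comp ?_)) <;>
        fun_prop
    have hmono := intervalIntegral.integral_mono_on (μ := volume) (f := fun r : ℝ =>
        ‖fderiv ℝ ξ ((s₀, t₀) + r • (x - (s₀, t₀))) (x - (s₀, t₀))‖) (g := fun r => Ψ x r)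
        zero_le_one (hnormc.intervalIntegrable 0 1) (hΨxc.intervalIntegrable 0 1)
        (fun r _ => hkey r)
    have heq : (∫ r in (0:ℝ)..(1:ℝ), Ψ x r) = ∫ r in Ioc (0:ℝ) 1, Ψ x r :=
      intervalIntegral.integral_of_le zero_le_one
    linarith [hmono, heq.le, heq.ge]
  -- integrability of Ψ on the product
  have hΨint : Integrable (Function.uncurry Ψ)
      ((volume.restrict R).prod (volume.restrict (Ioc (0:ℝ) 1))) := by
    rw [Measure.prod_restrict, ← Measure.volume_eq_prod]
    have hbig : IntegrableOn (Function.uncurry Ψ)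
        ((Icc s₀ (s₀+a) ×ˢ Icc t₀ (t₀+b)) ×ˢ Icc (0:ℝ) 1) :=
      hΨc.continuousOn.integrableOn_compact
        ((isCompact_Icc.prod isCompact_Icc).prod isCompact_Icc)
    exact hbig.mono_set (prod_mono (prod_mono Ioc_subset_Icc_self Ioc_subset_Icc_self)
      Ioc_subset_Icc_self)
  have hf₂int : IntegrableOn (fun x => ∫ r in Ioc (0:ℝ) 1, Ψ x r) R := hΨint.integral_prod_left
  have hξnormint : IntegrableOn (fun x => ‖ξ x‖) R := by
    rw [hRdef]; exact rectIntegrable hξ.continuous.norm _ _ _ _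
  -- Step 2 : average over the rectangle
  have step2 : (a*b) * ‖ξ (s₀, t₀)‖
      ≤ (∫ x in R, ‖ξ x‖) + ∫ x in R, (∫ r in Ioc (0:ℝ) 1, Ψ x r) := by
    have hconst : IntegrableOn (fun _ : ℝ × ℝ => ‖ξ (s₀, t₀)‖) R :=
      integrableOn_const hRvolfin
    have h1 : ∫ _ in R, ‖ξ (s₀, t₀)‖ = (a*b) * ‖ξ (s₀, t₀)‖ := by
      rw [setIntegral_const, smul_eq_mul, measureReal_def, hRvolR]
    have h2 := setIntegral_mono_on hconst (hξnormint.add hf₂int)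
      (measurableSet_Ioc.prod measurableSet_Ioc) step1
    rw [h1] at h2
    exact le_trans h2 (le_of_eq (integral_add hξnormint hf₂int))
  -- Step 3 : Hölder for the zeroth order term
  have stripsub : R ⊆ univ ×ˢ Ioc t₀ (t₀+1) := by
    rw [hRdef]
    exact prod_mono (subset_univ _) (Ioc_subset_Ioc le_rfl (by linarith))
  have step3 : ∫ x in R, ‖ξ x‖ ≤ (a*b) ^ (1 - 1/p) * IA ^ (1/p) := by
    have hh := holderRect (f := fun x => ‖ξ x‖) hξ.continuous.norm
      (fun x => norm_nonneg _) hpq s₀ (s₀+a) t₀ (t₀+b)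
    rw [← hRdef, hRvolR, hpc] at hh
    refine le_trans hh ?_
    have hmono : ∫ x in R, ‖ξ x‖ ^ p ≤ IA := by
      have hmono0 : ∫ x in R, ‖ξ x‖ ^ p ≤ ∫ x in univ ×ˢ Ioc t₀ (t₀+1), ‖ξ x‖ ^ p := by
        refine setIntegral_mono_set (stripIntegrable hξpc hξpT t₀ (t₀+1)) ?_ ?_
        · exact Filter.Eventually.of_forall (fun x => Real.rpow_nonneg (norm_nonneg _) _)
        · exact HasSubset.Subset.eventuallyLE stripsub
      have hper' : ∀ s t : ℝ, ‖ξ (s, t+1)‖ ^ p = ‖ξ (s, t)‖ ^ p := by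
        intro s t; rw [hper s t]
      rwa [stripPeriodic hξpc hξpT hper' t₀] at hmono0
    refine mul_le_mul_of_nonneg_left ?_ (Real.rpow_nonneg (by positivity) _)
    refine Real.rpow_le_rpow ?_ hmono (by positivity)
    exact setIntegral_nonneg (measurableSet_Ioc.prod measurableSet_Ioc)
      (fun x _ => Real.rpow_nonneg (norm_nonneg _) _)
  -- Step 4 : Hölder + rescaling for the first order terms
  set M : ℝ := (a*b) ^ (1 - 1/p) * (a * IC1 ^ (1/p) + b * IC2 ^ (1/p)) with hMdef
  have hMnn : 0 ≤ M := by
    rw [hMdef]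
    have h1 : 0 ≤ IC1 ^ (1/p) := Real.rpow_nonneg hIC1nn _
    have h2 : 0 ≤ IC2 ^ (1/p) := Real.rpow_nonneg hIC2nn _
    have : (0:ℝ) ≤ (a*b) ^ (1 - 1/p) := Real.rpow_nonneg (by positivity) _
    positivity
  have step4 : ∀ r ∈ Ioc (0:ℝ) 1, ∫ x in R, Ψ x r ≤ M * r ^ (-(2/p)) := by
    rintro r ⟨hr0, hr1⟩
    -- each first order piece
    have key : ∀ g : ℝ × ℝ → ℝ, Continuous g → (∀ x, 0 ≤ g x) →
        (∀ x : ℝ × ℝ, T < |x.1| → g x ^ p = 0) →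
        (∀ s t : ℝ, g (s, t+1) = g (s, t)) →
        ∀ IC : ℝ, (∫ x in (univ ×ˢ Ioc (0:ℝ) 1 : Set (ℝ × ℝ)), g x ^ p) = IC → 0 ≤ IC →
        ∫ x in R, g (Φ x r) ≤ (a*b) ^ (1 - 1/p) * (r ^ (-(2/p)) * IC ^ (1/p)) := by
      intro g hgc hgnn hgpT hgper IC hIC hICnn
      have hgΦc : Continuous fun x : ℝ × ℝ => g (Φ x r) := by
        apply hgc.comp; rw [hΦdef]; fun_prop
      have hgpc : Continuous fun x : ℝ × ℝ => g x ^ p := hgc.rpow_const (fun _ => Or.inr hp0.le)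
      have hh := holderRect (f := fun x => g (Φ x r)) hgΦc (fun x => hgnn _) hpq
        s₀ (s₀+a) t₀ (t₀+b)
      rw [← hRdef, hRvolR, hpc] at hh
      have hCoV : ∫ x in R, (g (Φ x r)) ^ p
          = (r*r)⁻¹ * ∫ y in Ioc s₀ (s₀+r*a) ×ˢ Ioc t₀ (t₀+r*b), g y ^ p := by
        rw [hRdef]
        have := rectCoV (h := fun y => g y ^ p) hgpc hr0 ha0.le hb0.le
          (α := s₀) (β := t₀) (a := a) (b := b)
        simpa [hΦdef] using this
      have hsub2 : ∫ y in Ioc s₀ (s₀+r*a) ×ˢ Ioc t₀ (t₀+r*b), g y ^ p ≤ IC := by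
        have hmono : ∫ y in Ioc s₀ (s₀+r*a) ×ˢ Ioc t₀ (t₀+r*b), g y ^ p
            ≤ ∫ x in univ ×ˢ Ioc t₀ (t₀+1), g x ^ p := by
          refine setIntegral_mono_set (stripIntegrable hgpc hgpT t₀ (t₀+1)) ?_ ?_
          · exact Filter.Eventually.of_forall (fun x => Real.rpow_nonneg (hgnn _) _)
          · refine HasSubset.Subset.eventuallyLE ?_
            refine prod_mono (subset_univ _) (Ioc_subset_Ioc le_rfl ?_)
            nlinarith
        have hper2 : ∀ s t : ℝ, g (s, t+1) ^ p = g (s, t) ^ p := by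
          intro s t; rw [hgper s t]
        rwa [stripPeriodic hgpc hgpT hper2 t₀, hIC] at hmono
      have hrr : ((r*r)⁻¹ * ∫ y in Ioc s₀ (s₀+r*a) ×ˢ Ioc t₀ (t₀+r*b), g y ^ p) ^ (1/p)
          ≤ r ^ (-(2/p)) * IC ^ (1/p) := by
        have hint_nn : 0 ≤ ∫ y in Ioc s₀ (s₀+r*a) ×ˢ Ioc t₀ (t₀+r*b), g y ^ p :=
          setIntegral_nonneg (measurableSet_Ioc.prod measurableSet_Ioc)
            (fun x _ => Real.rpow_nonneg (hgnn _) _)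
        have h1 : ((r*r)⁻¹ * ∫ y in Ioc s₀ (s₀+r*a) ×ˢ Ioc t₀ (t₀+r*b), g y ^ p) ^ (1/p)
            ≤ ((r*r)⁻¹ * IC) ^ (1/p) := by
          apply Real.rpow_le_rpow (by positivity) _ (by positivity)
          exact mul_le_mul_of_nonneg_left hsub2 (by positivity)
        refine le_trans h1 ?_
        rw [Real.mul_rpow (by positivity) hICnn]
        have h2 : ((r*r)⁻¹) ^ (1/p) = r ^ (-(2/p)) := by
          have e0 : r ^ (2:ℝ) = r * r := by
            rw [show (2:ℝ) = ((2:ℕ):ℝ) by norm_num, Real.rpow_natCast]; ring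
          have e1 : (r*r)⁻¹ = r ^ (-(2:ℝ)) := by rw [Real.rpow_neg hr0.le, e0]
          rw [e1, ← Real.rpow_mul hr0.le, show (-(2:ℝ)) * (1/p) = -(2/p) by ring]
        rw [h2]
      -- combine
      calc ∫ x in R, g (Φ x r)
          ≤ (a*b) ^ (1 - 1/p) * (∫ x in R, (g (Φ x r)) ^ p) ^ (1/p) := hh
        _ = (a*b) ^ (1 - 1/p) * ((r*r)⁻¹ *
              ∫ y in Ioc s₀ (s₀+r*a) ×ˢ Ioc t₀ (t₀+r*b), g y ^ p) ^ (1/p) := by rw [hCoV]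
        _ ≤ (a*b) ^ (1 - 1/p) * (r ^ (-(2/p)) * IC ^ (1/p)) := by
            exact mul_le_mul_of_nonneg_left hrr (Real.rpow_nonneg (by positivity) _)
    have k1 := key g₁ hg₁c (fun x => norm_nonneg _) hg₁pT hg₁per IC1 hIC1def.symm hIC1nn
    have k2 := key g₂ hg₂c (fun x => norm_nonneg _) hg₂pT hg₂per IC2 hIC2def.symm hIC2nn
    -- split the integral of Ψ
    have hg₁Φint : IntegrableOn (fun x => g₁ (Φ x r)) R := by
      rw [hRdef]
      refine rectIntegrable ?_ _ _ _ _
      apply hg₁c.comp; rw [hΦdef]; fun_prop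
    have hg₂Φint : IntegrableOn (fun x => g₂ (Φ x r)) R := by
      rw [hRdef]
      refine rectIntegrable ?_ _ _ _ _
      apply hg₂c.comp; rw [hΦdef]; fun_prop
    have hsplit : ∫ x in R, Ψ x r
        = a * (∫ x in R, g₁ (Φ x r)) + b * (∫ x in R, g₂ (Φ x r)) := by
      rw [hΨdef]
      rw [integral_add (hg₁Φint.const_mul a) (hg₂Φint.const_mul b),
        integral_const_mul, integral_const_mul]
    rw [hsplit]
    calc a * (∫ x in R, g₁ (Φ x r)) + b * (∫ x in R, g₂ (Φ x r))
        ≤ a * ((a*b) ^ (1 - 1/p) * (r ^ (-(2/p)) * IC1 ^ (1/p)))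
          + b * ((a*b) ^ (1 - 1/p) * (r ^ (-(2/p)) * IC2 ^ (1/p))) := by
          gcongr
      _ = M * r ^ (-(2/p)) := by rw [hMdef]; ring
  -- Step 5 : Fubini swap
  have step5 : ∫ x in R, (∫ r in Ioc (0:ℝ) 1, Ψ x r)
      = ∫ r in Ioc (0:ℝ) 1, ∫ x in R, Ψ x r := integral_integral_swap hΨint
  -- Step 6 : integrate the singular weight
  have hrpow_int : IntegrableOn (fun r : ℝ => r ^ (-(2/p))) (Ioc (0:ℝ) 1) :=
    (intervalIntegral.intervalIntegrable_rpow' (by linarith : (-1:ℝ) < -(2/p))).1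
  have hrpow_val : ∫ r in Ioc (0:ℝ) 1, r ^ (-(2/p)) = K := by
    rw [← intervalIntegral.integral_of_le zero_le_one,
      integral_rpow (Or.inl (by linarith : (-1:ℝ) < -(2/p)))]
    rw [Real.one_rpow, Real.zero_rpow (by linarith : -(2/p) + 1 ≠ 0)]
    rw [hKdef]
    field_simp
    ring_nf
  have step6 : ∫ x in R, (∫ r in Ioc (0:ℝ) 1, Ψ x r) ≤ M * K := by
    rw [step5]
    have hle : (fun r => ∫ x in R, Ψ x r) ≤ᵐ[volume.restrict (Ioc (0:ℝ) 1)]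
        (fun r => M * r ^ (-(2/p))) := by
      filter_upwards [ae_restrict_mem measurableSet_Ioc] with r hr
      exact step4 r hr
    have hnn : 0 ≤ᵐ[volume.restrict (Ioc (0:ℝ) 1)] (fun r => ∫ x in R, Ψ x r) :=
      Filter.Eventually.of_forall (fun r => setIntegral_nonneg
        (measurableSet_Ioc.prod measurableSet_Ioc) (fun x _ => hΨnn x r))
    have h := integral_mono_of_nonneg hnn (hrpow_int.const_mul M) hle
    rwa [integral_const_mul, hrpow_val] at h
  -- final assembly
  have main : (a*b) * ‖ξ (s₀, t₀)‖
      ≤ (a*b) ^ (1 - 1/p) * (1 + K) * (IA ^ (1/p) + b * IC2 ^ (1/p) + a * IC1 ^ (1/p)) := by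
    have h := le_trans step2 (add_le_add step3 step6)
    refine le_trans h ?_
    rw [hMdef]
    have hA : 0 ≤ IA ^ (1/p) := Real.rpow_nonneg hIAnn _
    have hC1 : 0 ≤ IC1 ^ (1/p) := Real.rpow_nonneg hIC1nn _
    have hC2 : 0 ≤ IC2 ^ (1/p) := Real.rpow_nonneg hIC2nn _
    have hab : (0:ℝ) ≤ (a*b) ^ (1 - 1/p) := Real.rpow_nonneg (by positivity) _
    nlinarith [mul_nonneg (mul_nonneg hab ha0.le) hC1, mul_nonneg (mul_nonneg hab hb0.le) hC2,
      mul_nonneg hab hA, mul_nonneg hK0.le (mul_nonneg hab hA)]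
  -- divide by a*b
  have hab0 : (0:ℝ) < a*b := by positivity
  have habpow : (a*b)⁻¹ * (a*b) ^ (1 - 1/p) = ε ^ (-(β₁ + β₂) / p) := by
    have e1 : (a*b)⁻¹ = (a*b) ^ (-1:ℝ) := (Real.rpow_neg_one _).symm
    rw [e1, ← Real.rpow_add hab0]
    have e2 : (-1) + (1 - 1/p) = -(1/p) := by ring
    rw [e2]
    have e3 : a*b = ε ^ (β₂ + β₁) := by
      rw [hadef, hbdef, ← Real.rpow_add hε0]
    rw [e3, ← Real.rpow_mul hε0.le]
    congr 1
    field_simp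
    ring
  have final : ‖ξ (s₀, t₀)‖
      ≤ (1 + K) * ε ^ (-(β₁ + β₂) / p) * (IA ^ (1/p) + b * IC2 ^ (1/p) + a * IC1 ^ (1/p)) := by
    have h1 : ‖ξ (s₀, t₀)‖ = (a*b)⁻¹ * ((a*b) * ‖ξ (s₀, t₀)‖) := by
      field_simp
    rw [h1]
    calc (a*b)⁻¹ * ((a*b) * ‖ξ (s₀, t₀)‖)
        ≤ (a*b)⁻¹ * ((a*b) ^ (1 - 1/p) * (1 + K)
            * (IA ^ (1/p) + b * IC2 ^ (1/p) + a * IC1 ^ (1/p))) := by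
          exact mul_le_mul_of_nonneg_left main (by positivity)
      _ = ((a*b)⁻¹ * (a*b) ^ (1 - 1/p)) * (1 + K)
            * (IA ^ (1/p) + b * IC2 ^ (1/p) + a * IC1 ^ (1/p)) := by ring
      _ = (1 + K) * ε ^ (-(β₁ + β₂) / p)
            * (IA ^ (1/p) + b * IC2 ^ (1/p) + a * IC1 ^ (1/p)) := by rw [habpow]; ring
  rw [hcylA, hcylC1, hcylC2]
  exact final
end

section
/- Define m : ℝ² ∖ {(0,0)} → ℂ by m(σ,τ) := iσ/(τ² + iσ). Then m is smooth, its partial derivatives are given by ∂_σ m = iτ²/(τ² + iσ)², ∂_τ m = −2iστ/(τ² + iσ)², and ∂_σ ∂_τ m = −2iτ(τ² − iσ)/(τ² + iσ)³, and there exists a constant c > 0 such that |m(σ,τ)| + |σ ∂_σ m(σ,τ)| + |τ ∂_τ m(σ,τ)| + |σ τ ∂_σ ∂_τ m(σ,τ)| ≤ c for all (σ,τ) ∈ ℝ² ∖ {(0,0)}. -/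
open Complex ContinuousLinearMap

/-- The multiplier `m(σ,τ) = iσ/(τ² + iσ)` of the heat operator `∂ₛ − ∂ₜ∂ₜ`. -/
noncomputable def mHeat (q : ℝ × ℝ) : ℂ :=
  (Complex.I * (q.1 : ℂ)) / ((q.2 : ℂ) ^ 2 + Complex.I * (q.1 : ℂ))

noncomputable def Dheat (q : ℝ × ℝ) : ℂ := (q.2 : ℂ) ^ 2 + Complex.I * (q.1 : ℂ)

lemma Dheat_ne (q : ℝ × ℝ) (hq : q ≠ 0) : Dheat q ≠ 0 := by
  intro h
  apply hq
  have hre := congrArg Complex.re h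
  have him := congrArg Complex.im h
  simp [Dheat, Complex.add_re, Complex.add_im, pow_two, Complex.mul_re, Complex.mul_im] at hre him
  ext
  · exact him
  · simpa using hre

-- the coordinate CLMs
noncomputable def Fcl : ℝ × ℝ →L[ℝ] ℂ := Complex.ofRealCLM.comp (ContinuousLinearMap.fst ℝ ℝ ℝ)
noncomputable def Scl : ℝ × ℝ →L[ℝ] ℂ := Complex.ofRealCLM.comp (ContinuousLinearMap.snd ℝ ℝ ℝ)

lemma hasFDerivAt_F (q : ℝ × ℝ) : HasFDerivAt (fun p : ℝ × ℝ => (p.1 : ℂ)) Fcl q :=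
  Fcl.hasFDerivAt

lemma hasFDerivAt_S (q : ℝ × ℝ) : HasFDerivAt (fun p : ℝ × ℝ => (p.2 : ℂ)) Scl q :=
  Scl.hasFDerivAt

-- general division rule
lemma hasFDerivAt_div' {f g : ℝ × ℝ → ℂ} {f' g' : ℝ × ℝ →L[ℝ] ℂ} {x : ℝ × ℝ}
    (hf : HasFDerivAt f f' x) (hg : HasFDerivAt g g' x) (hx : g x ≠ 0) :
    HasFDerivAt (fun y => f y / g y)
      (((g x) ^ 2)⁻¹ • ((g x) • f' - (f x) • g')) x := by
  have hinv : HasFDerivAt (fun y => (g y)⁻¹)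
      ((-mulLeftRight ℝ ℂ (g x)⁻¹ (g x)⁻¹).comp g') x :=
    (hasFDerivAt_inv' hx).comp x hg
  have h2 := hf.mul hinv
  simp only [div_eq_mul_inv]
  refine h2.congr_fderiv ?_
  refine ContinuousLinearMap.ext fun v => ?_
  simp only [ContinuousLinearMap.smul_apply, ContinuousLinearMap.sub_apply,
    ContinuousLinearMap.add_apply, ContinuousLinearMap.comp_apply,
    ContinuousLinearMap.neg_apply, mulLeftRight_apply, smul_eq_mul]
  field_simp
  ring

noncomputable def Dd (q : ℝ × ℝ) : ℝ × ℝ →L[ℝ] ℂ :=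
  ((q.2 : ℂ) • Scl + (q.2 : ℂ) • Scl) + Complex.I • Fcl

lemma hasFDerivAt_N (q : ℝ × ℝ) :
    HasFDerivAt (fun p : ℝ × ℝ => Complex.I * (p.1 : ℂ)) (Complex.I • Fcl) q :=
  (hasFDerivAt_F q).const_mul Complex.I

lemma hasFDerivAt_Dheat (q : ℝ × ℝ) : HasFDerivAt Dheat (Dd q) q := by
  have h := ((hasFDerivAt_S q).mul (hasFDerivAt_S q)).add (hasFDerivAt_N q)
  have : Dheat = fun p : ℝ × ℝ => (p.2 : ℂ) * (p.2 : ℂ) + Complex.I * (p.1 : ℂ) := by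
    funext p; simp [Dheat, pow_two]
  rw [Dd]; rw [this]; exact h

noncomputable def Lm (q : ℝ × ℝ) : ℝ × ℝ →L[ℝ] ℂ :=
  ((Dheat q) ^ 2)⁻¹ • ((Dheat q) • (Complex.I • Fcl) - (Complex.I * (q.1 : ℂ)) • Dd q)

lemma hasFDerivAt_mHeat (q : ℝ × ℝ) (hq : q ≠ 0) : HasFDerivAt mHeat (Lm q) q :=
  hasFDerivAt_div' (hasFDerivAt_N q) (hasFDerivAt_Dheat q) (Dheat_ne q hq)

lemma fderiv_mHeat (q : ℝ × ℝ) (hq : q ≠ 0) : fderiv ℝ mHeat q = Lm q :=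
  (hasFDerivAt_mHeat q hq).fderiv

lemma Fcl_apply (v : ℝ × ℝ) : Fcl v = (v.1 : ℂ) := by simp [Fcl]
lemma Scl_apply (v : ℝ × ℝ) : Scl v = (v.2 : ℂ) := by simp [Scl]

lemma fderiv_mHeat_fst (q : ℝ × ℝ) (hq : q ≠ 0) :
    fderiv ℝ mHeat q (1, 0) =
      Complex.I * (q.2 : ℂ) ^ 2 / ((q.2 : ℂ) ^ 2 + Complex.I * (q.1 : ℂ)) ^ 2 := by
  have hne := Dheat_ne q hq
  rw [fderiv_mHeat q hq]
  simp only [Lm, Dd, ContinuousLinearMap.smul_apply, ContinuousLinearMap.sub_apply,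
    ContinuousLinearMap.add_apply, Fcl_apply, Scl_apply, smul_eq_mul]
  rw [show ((q.2 : ℂ) ^ 2 + Complex.I * (q.1 : ℂ)) = Dheat q from rfl]
  push_cast
  field_simp [Dheat]
  simp only [Dheat]
  ring

lemma fderiv_mHeat_snd (q : ℝ × ℝ) (hq : q ≠ 0) :
    fderiv ℝ mHeat q (0, 1) =
      -2 * Complex.I * (q.1 : ℂ) * (q.2 : ℂ) /
        ((q.2 : ℂ) ^ 2 + Complex.I * (q.1 : ℂ)) ^ 2 := by
  have hne := Dheat_ne q hq
  rw [fderiv_mHeat q hq]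
  simp only [Lm, Dd, ContinuousLinearMap.smul_apply, ContinuousLinearMap.sub_apply,
    ContinuousLinearMap.add_apply, Fcl_apply, Scl_apply, smul_eq_mul]
  rw [show ((q.2 : ℂ) ^ 2 + Complex.I * (q.1 : ℂ)) = Dheat q from rfl]
  push_cast
  field_simp [Dheat]
  ring

noncomputable def Gsnd (q : ℝ × ℝ) : ℂ :=
  (-2 * Complex.I) * ((q.1 : ℂ) * (q.2 : ℂ)) / (Dheat q) ^ 2

noncomputable def LG (q : ℝ × ℝ) : ℝ × ℝ →L[ℝ] ℂ :=
  (((Dheat q) ^ 2) ^ 2)⁻¹ •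
    (((Dheat q) ^ 2) • ((-2 * Complex.I) • ((q.1 : ℂ) • Scl + (q.2 : ℂ) • Fcl)) -
      ((-2 * Complex.I) * ((q.1 : ℂ) * (q.2 : ℂ))) • ((Dheat q) • Dd q + (Dheat q) • Dd q))

lemma hasFDerivAt_Gsnd (q : ℝ × ℝ) (hq : q ≠ 0) : HasFDerivAt Gsnd (LG q) q := by
  have hn : HasFDerivAt (fun p : ℝ × ℝ => (-2 * Complex.I) * ((p.1 : ℂ) * (p.2 : ℂ)))
      ((-2 * Complex.I) • ((q.1 : ℂ) • Scl + (q.2 : ℂ) • Fcl)) q :=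
    ((hasFDerivAt_F q).mul (hasFDerivAt_S q)).const_mul _
  have hd2 : HasFDerivAt (fun p : ℝ × ℝ => (Dheat p) ^ 2)
      ((Dheat q) • Dd q + (Dheat q) • Dd q) q := by
    have := (hasFDerivAt_Dheat q).mul (hasFDerivAt_Dheat q)
    simp only [pow_two]; exact this
  exact hasFDerivAt_div' hn hd2 (pow_ne_zero 2 (Dheat_ne q hq))

lemma fderiv_snd_eventually (q : ℝ × ℝ) (hq : q ≠ 0) :
    (fun x => fderiv ℝ mHeat x (0, 1)) =ᶠ[nhds q] Gsnd := by
  have hopen : IsOpen {x : ℝ × ℝ | x ≠ 0} := isOpen_ne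
  filter_upwards [hopen.mem_nhds hq] with x hx
  rw [fderiv_mHeat_snd x hx]
  simp only [Gsnd, Dheat]
  ring

lemma fderiv2 (q : ℝ × ℝ) (hq : q ≠ 0) :
    fderiv ℝ (fun x => fderiv ℝ mHeat x (0, 1)) q (1, 0) =
      -2 * Complex.I * (q.2 : ℂ) * ((q.2 : ℂ) ^ 2 - Complex.I * (q.1 : ℂ)) /
        ((q.2 : ℂ) ^ 2 + Complex.I * (q.1 : ℂ)) ^ 3 := by
  have hne := Dheat_ne q hq
  rw [(fderiv_snd_eventually q hq).fderiv_eq, (hasFDerivAt_Gsnd q hq).fderiv]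
  simp only [LG, Dd, ContinuousLinearMap.smul_apply, ContinuousLinearMap.sub_apply,
    ContinuousLinearMap.add_apply, Fcl_apply, Scl_apply, smul_eq_mul]
  rw [show ((q.2 : ℂ) ^ 2 + Complex.I * (q.1 : ℂ)) = Dheat q from rfl]
  push_cast
  field_simp [hne]
  simp only [Dheat]
  ring

lemma contDiffOn_mHeat : ContDiffOn ℝ (⊤ : ℕ∞) mHeat {q : ℝ × ℝ | q ≠ 0} := by
  have hnum : ContDiff ℝ (⊤ : ℕ∞) (fun q : ℝ × ℝ => Complex.I * (q.1 : ℂ)) :=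
    contDiff_const.mul (Complex.ofRealCLM.contDiff.comp contDiff_fst)
  have hden : ContDiff ℝ (⊤ : ℕ∞) Dheat :=
    ((Complex.ofRealCLM.contDiff.comp contDiff_snd).pow 2).add hnum
  have hinv : ContDiffOn ℝ (⊤ : ℕ∞) (fun q => (Dheat q)⁻¹) {q : ℝ × ℝ | q ≠ 0} :=
    hden.contDiffOn.inv (fun q hq => Dheat_ne q hq)
  have : ContDiffOn ℝ (⊤ : ℕ∞) (fun q : ℝ × ℝ => Complex.I * (q.1 : ℂ) * (Dheat q)⁻¹)
      {q : ℝ × ℝ | q ≠ 0} := hnum.contDiffOn.mul hinv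
  refine this.congr fun q _ => ?_
  simp [mHeat, Dheat, div_eq_mul_inv]

lemma normDheat_sq (q : ℝ × ℝ) : ‖Dheat q‖ ^ 2 = q.2 ^ 4 + q.1 ^ 2 := by
  rw [Complex.sq_norm]
  simp [Dheat, Complex.normSq_apply, Complex.add_re, Complex.add_im, pow_two,
    Complex.mul_re, Complex.mul_im]
  ring

lemma abs_fst_le (q : ℝ × ℝ) : |q.1| ≤ ‖Dheat q‖ := by
  have h := normDheat_sq q
  nlinarith [norm_nonneg (Dheat q), abs_nonneg q.1, _root_.sq_abs q.1, sq_nonneg (q.2 ^ 2),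
    sq_nonneg (‖Dheat q‖ + |q.1|)]

lemma sq_snd_le (q : ℝ × ℝ) : q.2 ^ 2 ≤ ‖Dheat q‖ := by
  have h := normDheat_sq q
  nlinarith [norm_nonneg (Dheat q), sq_nonneg q.1, sq_nonneg (‖Dheat q‖ + q.2 ^ 2)]

lemma norm_conjD (q : ℝ × ℝ) : ‖(q.2 : ℂ) ^ 2 - Complex.I * (q.1 : ℂ)‖ = ‖Dheat q‖ := by
  have : (q.2 : ℂ) ^ 2 - Complex.I * (q.1 : ℂ) = (starRingEnd ℂ) (Dheat q) := by
    simp [Dheat, map_add, map_mul, map_pow, Complex.conj_I, Complex.conj_ofReal]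
    ring
  rw [this, RCLike.norm_conj]

lemma heat_bound (q : ℝ × ℝ) (hq : q ≠ 0) :
    ‖mHeat q‖ + ‖(q.1 : ℂ) * fderiv ℝ mHeat q (1, 0)‖ +
      ‖(q.2 : ℂ) * fderiv ℝ mHeat q (0, 1)‖ +
      ‖(q.1 : ℂ) * (q.2 : ℂ) * fderiv ℝ (fun x => fderiv ℝ mHeat x (0, 1)) q (1, 0)‖
      ≤ 6 := by
  rw [fderiv_mHeat_fst q hq, fderiv_mHeat_snd q hq, fderiv2 q hq]
  simp only [mHeat, norm_div, norm_mul, norm_pow, norm_neg, Complex.norm_I, Complex.norm_real,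
    Complex.norm_ofNat, one_mul, Real.norm_eq_abs]
  rw [show ((q.2 : ℂ) ^ 2 + Complex.I * (q.1 : ℂ)) = Dheat q from rfl, norm_conjD q]
  set a := |q.1| with ha_def
  set b := |q.2| with hb_def
  set d := ‖Dheat q‖ with hd_def
  have hd : 0 < d := norm_pos_iff.mpr (Dheat_ne q hq)
  have ha : a ≤ d := abs_fst_le q
  have hb2 : b ^ 2 ≤ d := by rw [hb_def, _root_.sq_abs]; exact sq_snd_le q
  have ha0 : 0 ≤ a := abs_nonneg _
  have hb0 : 0 ≤ b := abs_nonneg _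
  have key : a * b ^ 2 ≤ d ^ 2 := by nlinarith
  have hX : a * b ^ 2 / d ^ 2 ≤ 1 := (div_le_one (by positivity)).2 key
  have t1 : a / d ≤ 1 := (div_le_one hd).2 ha
  have e2 : a * (b ^ 2 / d ^ 2) = a * b ^ 2 / d ^ 2 := by ring
  have e3 : b * (2 * 1 * a * b / d ^ 2) = 2 * (a * b ^ 2 / d ^ 2) := by ring
  have e4 : a * b * (2 * 1 * b * d / d ^ 3) = 2 * (a * b ^ 2 / d ^ 2) := by
    field_simp
  rw [e2, e3, e4]
  linarith


/-- The multiplier `m(σ,τ) = iσ/(τ² + iσ)` is smooth on `ℝ² ∖ {0}`, its partial derivatives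
are given by the displayed formulas, and it satisfies the Marcinkiewicz–Mihlin bound
`|m| + |σ ∂_σ m| + |τ ∂_τ m| + |στ ∂_σ∂_τ m| ≤ c` on `ℝ² ∖ {0}`. -/
theorem statement13 :
    ContDiffOn ℝ (⊤ : ℕ∞) mHeat {q : ℝ × ℝ | q ≠ 0} ∧
    (∀ q : ℝ × ℝ, q ≠ 0 →
      fderiv ℝ mHeat q (1, 0) =
        Complex.I * (q.2 : ℂ) ^ 2 / ((q.2 : ℂ) ^ 2 + Complex.I * (q.1 : ℂ)) ^ 2) ∧
    (∀ q : ℝ × ℝ, q ≠ 0 →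
      fderiv ℝ mHeat q (0, 1) =
        -2 * Complex.I * (q.1 : ℂ) * (q.2 : ℂ) /
          ((q.2 : ℂ) ^ 2 + Complex.I * (q.1 : ℂ)) ^ 2) ∧
    (∀ q : ℝ × ℝ, q ≠ 0 →
      fderiv ℝ (fun x => fderiv ℝ mHeat x (0, 1)) q (1, 0) =
        -2 * Complex.I * (q.2 : ℂ) * ((q.2 : ℂ) ^ 2 - Complex.I * (q.1 : ℂ)) /
          ((q.2 : ℂ) ^ 2 + Complex.I * (q.1 : ℂ)) ^ 3) ∧
    (∃ c : ℝ, 0 < c ∧ ∀ q : ℝ × ℝ, q ≠ 0 →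
      ‖mHeat q‖ + ‖(q.1 : ℂ) * fderiv ℝ mHeat q (1, 0)‖ +
        ‖(q.2 : ℂ) * fderiv ℝ mHeat q (0, 1)‖ +
        ‖(q.1 : ℂ) * (q.2 : ℂ) * fderiv ℝ (fun x => fderiv ℝ mHeat x (0, 1)) q (1, 0)‖
        ≤ c) := by
  exact ⟨contDiffOn_mHeat, fderiv_mHeat_fst, fderiv_mHeat_snd, fderiv2,
    ⟨6, by norm_num, heat_bound⟩⟩
end

section
/- Let D(σ,τ) := σ² + τ² + iσ and define, on ℝ² ∖ {(0,0)}, the functions m₁(σ,τ) := (σ² + iσ)/D(σ,τ), m₂(σ,τ) := στ/D(σ,τ), and m₃(σ,τ) := σ²/D(σ,τ). Then each m_j (j = 1,2,3) is smooth and there exists a constant c > 0 such that |m_j(σ,τ)| + |σ ∂_σ m_j(σ,τ)| + |τ ∂_τ m_j(σ,τ)| + |σ τ ∂_σ ∂_τ m_j(σ,τ)| ≤ c for all (σ,τ) ∈ ℝ² ∖ {(0,0)} and j = 1,2,3. -/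
open Complex

/-- The denominator `D(σ,τ) = σ² + τ² + iσ`. -/
noncomputable def Dfl (q : ℝ × ℝ) : ℂ :=
  (q.1 : ℂ) ^ 2 + (q.2 : ℂ) ^ 2 + Complex.I * (q.1 : ℂ)

/-- The multiplier `m₁(σ,τ) = (σ² + iσ)/D(σ,τ)`. -/
noncomputable def mFl₁ (q : ℝ × ℝ) : ℂ :=
  ((q.1 : ℂ) ^ 2 + Complex.I * (q.1 : ℂ)) / Dfl q

/-- The multiplier `m₂(σ,τ) = στ/D(σ,τ)`. -/
noncomputable def mFl₂ (q : ℝ × ℝ) : ℂ :=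
  ((q.1 : ℂ) * (q.2 : ℂ)) / Dfl q

/-- The multiplier `m₃(σ,τ) = σ²/D(σ,τ)`. -/
noncomputable def mFl₃ (q : ℝ × ℝ) : ℂ :=
  (q.1 : ℂ) ^ 2 / Dfl q

/-- The Marcinkiewicz–Mihlin quantity
`|m| + |σ ∂_σ m| + |τ ∂_τ m| + |στ ∂_σ∂_τ m|` at the point `q = (σ,τ)`. -/
noncomputable def mihlinBound (m : ℝ × ℝ → ℂ) (q : ℝ × ℝ) : ℝ :=
  ‖m q‖ + ‖(q.1 : ℂ) * fderiv ℝ m q (1, 0)‖ + ‖(q.2 : ℂ) * fderiv ℝ m q (0, 1)‖ +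
    ‖(q.1 : ℂ) * (q.2 : ℂ) * fderiv ℝ (fun x => fderiv ℝ m x (0, 1)) q (1, 0)‖

/-! ### Auxiliary lemmas -/

lemma Dfl_re (q : ℝ × ℝ) : (Dfl q).re = q.1 ^ 2 + q.2 ^ 2 := by
  simp [Dfl, pow_two]

lemma Dfl_im (q : ℝ × ℝ) : (Dfl q).im = q.1 := by
  simp [Dfl, pow_two]

lemma sq_le_normD (q : ℝ × ℝ) : q.1 ^ 2 + q.2 ^ 2 ≤ ‖Dfl q‖ := by
  have := Complex.re_le_norm (Dfl q)
  rw [Dfl_re] at this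
  simpa using this

lemma abs_fst_le_normD (q : ℝ × ℝ) : |q.1| ≤ ‖Dfl q‖ := by
  have := Complex.abs_im_le_norm (Dfl q)
  rw [Dfl_im] at this
  simpa using this

lemma Dfl_ne_zero {q : ℝ × ℝ} (hq : q ≠ 0) : Dfl q ≠ 0 := by
  intro h
  apply hq
  have h2 := sq_le_normD q
  rw [h, norm_zero] at h2
  have h1' : q.1 = 0 := by nlinarith [sq_nonneg q.1, sq_nonneg q.2]
  have h2' : q.2 = 0 := by nlinarith [sq_nonneg q.1, sq_nonneg q.2]
  exact Prod.ext h1' h2'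

lemma normD_sq (q : ℝ × ℝ) : ‖Dfl q‖ ^ 2 = (q.1 ^ 2 + q.2 ^ 2) ^ 2 + q.1 ^ 2 := by
  rw [Complex.sq_norm, Complex.normSq_apply, Dfl_re, Dfl_im]; ring

lemma s_r2_le (q : ℝ × ℝ) : |q.1| * (q.1 ^ 2 + q.2 ^ 2) ≤ ‖Dfl q‖ ^ 2 := by
  rw [normD_sq]
  nlinarith [_root_.sq_abs q.1, abs_nonneg q.1, sq_nonneg ((q.1^2+q.2^2) - |q.1|)]

lemma bnds (s t d : ℝ) (hs : 0 ≤ s) (ht : 0 ≤ t) (hd : 0 < d)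
    (hA : s^2 + t^2 ≤ d) (hB : s ≤ d) (hC : s*(s^2+t^2) ≤ d^2) :
    (s^2+s ≤ 2*d) ∧ (s*((2*s+1)*t^2) ≤ 3*d^2) ∧ (t*((2*t)*(s^2+s)) ≤ 4*d^2) ∧
    ((s*t)*((2*t)*((2*s+1)*(t^2+s^2+s))) ≤ 12*d^3) ∧
    (s*t ≤ d) ∧ (s*(t*(t^2+s^2)) ≤ d^2) ∧ (t*(s*(s^2+t^2+s)) ≤ 2*d^2) ∧
    ((s*t)*((3*s^2+t^2+2*s)*d + 2*s*((s^2+t^2+s)*(2*s+1))) ≤ 18*d^3) ∧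
    (s^2 ≤ d) ∧ (s*(s*(2*t^2+s)) ≤ 3*d^2) ∧ (t*((2*t)*s^2) ≤ 2*d^2) ∧
    ((s*t)*((4*(s*t))*(t^2+s^2)) ≤ 4*d^3) := by
  have hs2 : 0 ≤ s^2 := sq_nonneg s
  have ht2 : 0 ≤ t^2 := sq_nonneg t
  have hst0 : 0 ≤ s*t := mul_nonneg hs ht
  have hd0 : 0 ≤ d := hd.le
  have hd2 : 0 ≤ d^2 := sq_nonneg d
  have h1 : s^2 ≤ d := by linarith
  have h2 : t^2 ≤ d := by linarith
  have hst : s*t ≤ s^2+t^2 := by nlinarith [sq_nonneg (s-t)]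
  have h3 : s*t ≤ d := le_trans hst hA
  have h4 : s^2*t^2 ≤ d^2 := by
    calc s^2*t^2 ≤ d*d := mul_le_mul h1 h2 ht2 hd0
    _ = d^2 := by ring
  have h5 : s*t^2 ≤ d^2 := by nlinarith [hC]
  have h5b : s*t*(s^2+t^2) ≤ d^2 := by
    calc s*t*(s^2+t^2) ≤ d*d := mul_le_mul h3 hA (by positivity) hd0
    _ = d^2 := by ring
  have h6 : s^2*t ≤ d^2 := by
    calc s^2*t = s*(s*t) := by ring
    _ ≤ d*d := mul_le_mul hB h3 hst0 hd0
    _ = d^2 := by ring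
  have h7 : s^3 ≤ d^2 := by nlinarith [hC]
  have h8 : s^2*t^2*(s^2+t^2) ≤ d^3 := by
    calc s^2*t^2*(s^2+t^2) ≤ d^2*d := mul_le_mul h4 hA (by positivity) hd2
    _ = d^3 := by ring
  have h9 : s^3*t^2 ≤ d^3 := by
    calc s^3*t^2 = s*(s^2*t^2) := by ring
    _ ≤ d*d^2 := mul_le_mul hB h4 (by positivity) hd0
    _ = d^3 := by ring
  have h10 : s*t^2*(s^2+t^2) ≤ d^3 := by
    calc s*t^2*(s^2+t^2) = t^2*(s*(s^2+t^2)) := by ring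
    _ ≤ d*d^2 := mul_le_mul h2 hC (by positivity) hd0
    _ = d^3 := by ring
  have h11 : s^2*t^2 ≤ d^3 := by
    have e1 : s*t^2 ≤ s*(s^2+t^2) := by nlinarith
    calc s^2*t^2 = s*(s*t^2) := by ring
    _ ≤ d*d^2 := mul_le_mul hB (le_trans e1 hC) (by positivity) hd0
    _ = d^3 := by ring
  have h12 : s^3*t ≤ d^3 := by
    calc s^3*t = s*(s^2*t) := by ring
    _ ≤ d*d^2 := mul_le_mul hB h6 (by positivity) hd0
    _ = d^3 := by ring
  have k1 : s^3*t ≤ d^2 := by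
    calc s^3*t = s^2*(s*t) := by ring
    _ ≤ d*d := mul_le_mul h1 h3 hst0 hd0
    _ = d^2 := by ring
  have k2 : s*t^3 ≤ d^2 := by
    calc s*t^3 = t^2*(s*t) := by ring
    _ ≤ d*d := mul_le_mul h2 h3 hst0 hd0
    _ = d^2 := by ring
  have g1 : s^3*t*d ≤ d^3 := by
    calc s^3*t*d ≤ d^2*d := mul_le_mul k1 (le_refl d) hd0 hd2
    _ = d^3 := by ring
  have g2 : s*t^3*d ≤ d^3 := by
    calc s*t^3*d ≤ d^2*d := mul_le_mul k2 (le_refl d) hd0 hd2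
    _ = d^3 := by ring
  have g3 : s^2*t*d ≤ d^3 := by
    calc s^2*t*d ≤ d^2*d := mul_le_mul h6 (le_refl d) hd0 hd2
    _ = d^3 := by ring
  have g4 : s^3*t*(s^2+t^2) ≤ d^3 := by
    calc s^3*t*(s^2+t^2) ≤ d^2*d := mul_le_mul k1 hA (by positivity) hd2
    _ = d^3 := by ring
  have g5 : s^2*t*(s^2+t^2) ≤ d^3 := by
    calc s^2*t*(s^2+t^2) = (s*t)*(s*(s^2+t^2)) := by ring
    _ ≤ d*d^2 := mul_le_mul h3 hC (by positivity) hd0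
    _ = d^3 := by ring
  have g6 : s^4*t ≤ d^3 := by
    calc s^4*t = s^2*(s^2*t) := by ring
    _ ≤ d*d^2 := mul_le_mul h1 h6 (by positivity) hd0
    _ = d^3 := by ring
  refine ⟨by linarith, ?_, ?_, ?_, h3, ?_, ?_, ?_, h1, ?_, ?_, ?_⟩
  · have e : s*((2*s+1)*t^2) = 2*(s^2*t^2) + (s*t^2) := by ring
    rw [e]; linarith
  · have e : t*((2*t)*(s^2+s)) = 2*(s^2*t^2) + 2*(s*t^2) := by ring
    rw [e]; linarith
  · have e : (s*t)*((2*t)*((2*s+1)*(t^2+s^2+s))) =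
        4*(s^2*t^2*(s^2+t^2)) + 4*(s^3*t^2) + 2*(s*t^2*(s^2+t^2)) + 2*(s^2*t^2) := by ring
    rw [e]; linarith
  · have e : s*(t*(t^2+s^2)) = s*t*(s^2+t^2) := by ring
    rw [e]; linarith
  · have e : t*(s*(s^2+t^2+s)) = s*t*(s^2+t^2) + s^2*t := by ring
    rw [e]; linarith
  · have e : (s*t)*((3*s^2+t^2+2*s)*d + 2*s*((s^2+t^2+s)*(2*s+1))) =
        3*(s^3*t*d) + (s*t^3*d) + 2*(s^2*t*d) + 4*(s^3*t*(s^2+t^2)) + 2*(s^2*t*(s^2+t^2))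
        + 4*(s^4*t) + 2*(s^3*t) := by ring
    rw [e]; linarith
  · have e : s*(s*(2*t^2+s)) = 2*(s^2*t^2) + s^3 := by ring
    rw [e]; linarith
  · have e : t*((2*t)*s^2) = 2*(s^2*t^2) := by ring
    rw [e]; linarith
  · have e : (s*t)*((4*(s*t))*(t^2+s^2)) = 4*(s^2*t^2*(s^2+t^2)) := by ring
    rw [e]; linarith

attribute [local simp] Pi.add_def Pi.sub_def Pi.mul_def

lemma hasDerivAt_ofReal (a : ℝ) : HasDerivAt (fun s : ℝ => (s : ℂ)) 1 a := by
  simpa using (hasDerivAt_id a).ofReal_comp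

lemma fderiv_apply_e1 {m : ℝ × ℝ → ℂ} {q : ℝ × ℝ} (hm : DifferentiableAt ℝ m q)
    {d : ℂ} (h : HasDerivAt (fun s => m (s, q.2)) d q.1) :
    fderiv ℝ m q (1, 0) = d := by
  have hι : HasDerivAt (fun s : ℝ => (s, q.2)) ((1 : ℝ), (0 : ℝ)) q.1 :=
    (hasDerivAt_id q.1).prodMk (hasDerivAt_const q.1 q.2)
  have h2 : HasDerivAt (fun s => m (s, q.2)) (fderiv ℝ m q ((1 : ℝ), (0 : ℝ))) q.1 := by
    have := hm.hasFDerivAt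
    rw [show q = (q.1, q.2) from rfl] at this
    exact this.comp_hasDerivAt q.1 hι
  exact h2.unique h

lemma fderiv_apply_e2 {m : ℝ × ℝ → ℂ} {q : ℝ × ℝ} (hm : DifferentiableAt ℝ m q)
    {d : ℂ} (h : HasDerivAt (fun t => m (q.1, t)) d q.2) :
    fderiv ℝ m q (0, 1) = d := by
  have hι : HasDerivAt (fun t : ℝ => (q.1, t)) ((0 : ℝ), (1 : ℝ)) q.2 :=
    (hasDerivAt_const q.2 q.1).prodMk (hasDerivAt_id q.2)
  have h2 : HasDerivAt (fun t => m (q.1, t)) (fderiv ℝ m q ((0 : ℝ), (1 : ℝ))) q.2 := by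
    have := hm.hasFDerivAt
    rw [show q = (q.1, q.2) from rfl] at this
    exact this.comp_hasDerivAt q.2 hι
  exact h2.unique h

lemma dS : Differentiable ℝ (fun x : ℝ × ℝ => ((x.1 : ℝ) : ℂ)) :=
  (Complex.ofRealCLM.comp (ContinuousLinearMap.fst ℝ ℝ ℝ)).differentiable

lemma dT : Differentiable ℝ (fun x : ℝ × ℝ => ((x.2 : ℝ) : ℂ)) :=
  (Complex.ofRealCLM.comp (ContinuousLinearMap.snd ℝ ℝ ℝ)).differentiable

lemma dD : Differentiable ℝ Dfl :=
  ((dS.pow 2).add (dT.pow 2)).add (dS.const_mul Complex.I)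

/-! Explicit partial derivatives. -/

noncomputable def F11 (x : ℝ × ℝ) : ℂ :=
  (2*(x.1:ℂ)+Complex.I) * (x.2:ℂ)^2 / (Dfl x * Dfl x)
noncomputable def gτ₁ (x : ℝ × ℝ) : ℂ :=
  (-2*(x.2:ℂ)) * ((x.1:ℂ)^2+Complex.I*(x.1:ℂ)) / (Dfl x * Dfl x)
noncomputable def F12 (x : ℝ × ℝ) : ℂ :=
  (x.2:ℂ) * ((x.2:ℂ)^2-(x.1:ℂ)^2) / (Dfl x * Dfl x)
noncomputable def gτ₂ (x : ℝ × ℝ) : ℂ :=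
  (x.1:ℂ) * ((x.1:ℂ)^2-(x.2:ℂ)^2+Complex.I*(x.1:ℂ)) / (Dfl x * Dfl x)
noncomputable def F13 (x : ℝ × ℝ) : ℂ :=
  (x.1:ℂ) * (2*(x.2:ℂ)^2+Complex.I*(x.1:ℂ)) / (Dfl x * Dfl x)
noncomputable def gτ₃ (x : ℝ × ℝ) : ℂ :=
  (-2*(x.2:ℂ)) * (x.1:ℂ)^2 / (Dfl x * Dfl x)
noncomputable def K₁ (x : ℝ × ℝ) : ℂ :=
  (-2*(x.2:ℂ)) * ((2*(x.1:ℂ)+Complex.I) * ((x.2:ℂ)^2-(x.1:ℂ)^2-Complex.I*(x.1:ℂ)))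
    / (Dfl x * (Dfl x * Dfl x))
noncomputable def K₂ (x : ℝ × ℝ) : ℂ :=
  ((3*(x.1:ℂ)^2-(x.2:ℂ)^2+2*Complex.I*(x.1:ℂ)) * Dfl x
    - (2*(x.1:ℂ)) * (((x.1:ℂ)^2-(x.2:ℂ)^2+Complex.I*(x.1:ℂ)) * (2*(x.1:ℂ)+Complex.I)))
    / (Dfl x * (Dfl x * Dfl x))
noncomputable def K₃ (x : ℝ × ℝ) : ℂ :=
  (-4*((x.1:ℂ)*(x.2:ℂ))) * ((x.2:ℂ)^2-(x.1:ℂ)^2) / (Dfl x * (Dfl x * Dfl x))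

/-! Differentiability of the multipliers and of the `τ`-partials. -/

lemma dm₁ {x : ℝ × ℝ} (hx : x ≠ 0) : DifferentiableAt ℝ mFl₁ x := by
  have h : DifferentiableAt ℝ
      (fun x : ℝ × ℝ => ((x.1:ℂ)^2 + Complex.I*(x.1:ℂ)) * (Dfl x)⁻¹) x :=
    (((dS x).pow 2).add ((dS x).const_mul Complex.I)).mul ((dD x).inv (Dfl_ne_zero hx))
  unfold mFl₁; simpa [div_eq_mul_inv] using h

lemma dm₂ {x : ℝ × ℝ} (hx : x ≠ 0) : DifferentiableAt ℝ mFl₂ x := by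
  have h : DifferentiableAt ℝ (fun x : ℝ × ℝ => ((x.1 : ℂ) * (x.2 : ℂ)) * (Dfl x)⁻¹) x :=
    ((dS x).mul (dT x)).mul ((dD x).inv (Dfl_ne_zero hx))
  unfold mFl₂; simpa [div_eq_mul_inv] using h

lemma dm₃ {x : ℝ × ℝ} (hx : x ≠ 0) : DifferentiableAt ℝ mFl₃ x := by
  have h : DifferentiableAt ℝ (fun x : ℝ × ℝ => (x.1 : ℂ)^2 * (Dfl x)⁻¹) x :=
    ((dS x).pow 2).mul ((dD x).inv (Dfl_ne_zero hx))
  unfold mFl₃; simpa [div_eq_mul_inv] using h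

lemma dDD {x : ℝ × ℝ} (hx : x ≠ 0) :
    DifferentiableAt ℝ (fun x => ((Dfl x) * (Dfl x))⁻¹) x :=
  ((dD x).mul (dD x)).inv (mul_ne_zero (Dfl_ne_zero hx) (Dfl_ne_zero hx))

lemma dgτ₁ {x : ℝ × ℝ} (hx : x ≠ 0) : DifferentiableAt ℝ gτ₁ x := by
  have h : DifferentiableAt ℝ (fun x : ℝ × ℝ =>
      (-2*(x.2:ℂ)) * ((x.1:ℂ)^2+Complex.I*(x.1:ℂ)) * ((Dfl x) * (Dfl x))⁻¹) x :=
    (((dT x).const_mul (-2)).mul (((dS x).pow 2).add ((dS x).const_mul Complex.I))).mul (dDD hx)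
  unfold gτ₁; simp only [div_eq_mul_inv]; exact h

lemma dgτ₂ {x : ℝ × ℝ} (hx : x ≠ 0) : DifferentiableAt ℝ gτ₂ x := by
  have h : DifferentiableAt ℝ (fun x : ℝ × ℝ =>
      (x.1:ℂ) * ((x.1:ℂ)^2-(x.2:ℂ)^2+Complex.I*(x.1:ℂ)) * ((Dfl x) * (Dfl x))⁻¹) x :=
    ((dS x).mul ((((dS x).pow 2).sub ((dT x).pow 2)).add ((dS x).const_mul Complex.I))).mul
      (dDD hx)
  unfold gτ₂; simp only [div_eq_mul_inv]; exact h

lemma dgτ₃ {x : ℝ × ℝ} (hx : x ≠ 0) : DifferentiableAt ℝ gτ₃ x := by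
  have h : DifferentiableAt ℝ (fun x : ℝ × ℝ =>
      (-2*(x.2:ℂ)) * (x.1:ℂ)^2 * ((Dfl x) * (Dfl x))⁻¹) x :=
    (((dT x).const_mul (-2)).mul ((dS x).pow 2)).mul (dDD hx)
  unfold gτ₃; simp only [div_eq_mul_inv]; exact h

/-! σ- and τ-slice derivative computations. -/

section slices
variable {x : ℝ × ℝ}

lemma fderiv1_m1 (hx : x ≠ 0) : fderiv ℝ mFl₁ x (1, 0) = F11 x := by
  apply fderiv_apply_e1 (dm₁ hx)
  have hid := hasDerivAt_ofReal x.1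
  have hsq : HasDerivAt (fun s : ℝ => ((s:ℂ))^2) (2*(x.1:ℂ)) x.1 := by
    simpa [pow_two, two_mul] using hid.mul hid
  have hnum : HasDerivAt (fun s : ℝ => (s:ℂ)^2 + Complex.I*(s:ℂ))
      (2*(x.1:ℂ)+Complex.I) x.1 := by
    simpa using hsq.add (hid.const_mul Complex.I)
  have hden : HasDerivAt (fun s : ℝ => (s:ℂ)^2 + (x.2:ℂ)^2 + Complex.I*(s:ℂ))
      (2*(x.1:ℂ)+Complex.I) x.1 := by
    simpa using (hsq.add (hasDerivAt_const x.1 ((x.2:ℂ)^2))).add (hid.const_mul Complex.I)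
  have h := hnum.div hden (Dfl_ne_zero hx)
  have hne : ((x.1:ℂ)^2+(x.2:ℂ)^2+Complex.I*(x.1:ℂ)) ≠ 0 := Dfl_ne_zero hx
  have hval : ((2*(x.1:ℂ)+Complex.I) * ((x.1:ℂ)^2+(x.2:ℂ)^2+Complex.I*(x.1:ℂ))
      - ((x.1:ℂ)^2+Complex.I*(x.1:ℂ)) * (2*(x.1:ℂ)+Complex.I))
      / ((x.1:ℂ)^2+(x.2:ℂ)^2+Complex.I*(x.1:ℂ))^2 = F11 x := by
    rw [F11, Dfl]
    field_simp
    ring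
  rw [← hval]; exact h

lemma fderiv2_m1 (hx : x ≠ 0) : fderiv ℝ mFl₁ x (0, 1) = gτ₁ x := by
  apply fderiv_apply_e2 (dm₁ hx)
  have hid := hasDerivAt_ofReal x.2
  have hsq : HasDerivAt (fun t : ℝ => ((t:ℂ))^2) (2*(x.2:ℂ)) x.2 := by
    simpa [pow_two, two_mul] using hid.mul hid
  have hnum : HasDerivAt (fun _ : ℝ => (x.1:ℂ)^2 + Complex.I*(x.1:ℂ)) 0 x.2 :=
    hasDerivAt_const _ _
  have hden : HasDerivAt (fun t : ℝ => (x.1:ℂ)^2 + (t:ℂ)^2 + Complex.I*(x.1:ℂ))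
      (2*(x.2:ℂ)) x.2 := by
    simpa using ((hasDerivAt_const x.2 ((x.1:ℂ)^2)).add hsq).add
      (hasDerivAt_const x.2 (Complex.I*(x.1:ℂ)))
  have h := hnum.div hden (Dfl_ne_zero hx)
  have hne : ((x.1:ℂ)^2+(x.2:ℂ)^2+Complex.I*(x.1:ℂ)) ≠ 0 := Dfl_ne_zero hx
  have hval : ((0:ℂ) * ((x.1:ℂ)^2+(x.2:ℂ)^2+Complex.I*(x.1:ℂ))
      - ((x.1:ℂ)^2+Complex.I*(x.1:ℂ)) * (2*(x.2:ℂ)))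
      / ((x.1:ℂ)^2+(x.2:ℂ)^2+Complex.I*(x.1:ℂ))^2 = gτ₁ x := by
    rw [gτ₁, Dfl]
    field_simp
    ring
  rw [← hval]; exact h

lemma fderiv1_m2 (hx : x ≠ 0) : fderiv ℝ mFl₂ x (1, 0) = F12 x := by
  apply fderiv_apply_e1 (dm₂ hx)
  have hid := hasDerivAt_ofReal x.1
  have hsq : HasDerivAt (fun s : ℝ => ((s:ℂ))^2) (2*(x.1:ℂ)) x.1 := by
    simpa [pow_two, two_mul] using hid.mul hid
  have hnum : HasDerivAt (fun s : ℝ => (s:ℂ) * (x.2:ℂ)) ((x.2:ℂ)) x.1 := by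
    simpa using hid.mul_const ((x.2:ℂ))
  have hden : HasDerivAt (fun s : ℝ => (s:ℂ)^2 + (x.2:ℂ)^2 + Complex.I*(s:ℂ))
      (2*(x.1:ℂ)+Complex.I) x.1 := by
    simpa using (hsq.add (hasDerivAt_const x.1 ((x.2:ℂ)^2))).add (hid.const_mul Complex.I)
  have h := hnum.div hden (Dfl_ne_zero hx)
  have hne : ((x.1:ℂ)^2+(x.2:ℂ)^2+Complex.I*(x.1:ℂ)) ≠ 0 := Dfl_ne_zero hx
  have hval : ((x.2:ℂ) * ((x.1:ℂ)^2+(x.2:ℂ)^2+Complex.I*(x.1:ℂ))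
      - (x.1:ℂ)*(x.2:ℂ) * (2*(x.1:ℂ)+Complex.I))
      / ((x.1:ℂ)^2+(x.2:ℂ)^2+Complex.I*(x.1:ℂ))^2 = F12 x := by
    rw [F12, Dfl]
    field_simp
    ring
  rw [← hval]; exact h

lemma fderiv2_m2 (hx : x ≠ 0) : fderiv ℝ mFl₂ x (0, 1) = gτ₂ x := by
  apply fderiv_apply_e2 (dm₂ hx)
  have hid := hasDerivAt_ofReal x.2
  have hsq : HasDerivAt (fun t : ℝ => ((t:ℂ))^2) (2*(x.2:ℂ)) x.2 := by
    simpa [pow_two, two_mul] using hid.mul hid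
  have hnum : HasDerivAt (fun t : ℝ => (x.1:ℂ) * (t:ℂ)) ((x.1:ℂ)) x.2 := by
    simpa using hid.const_mul ((x.1:ℂ))
  have hden : HasDerivAt (fun t : ℝ => (x.1:ℂ)^2 + (t:ℂ)^2 + Complex.I*(x.1:ℂ))
      (2*(x.2:ℂ)) x.2 := by
    simpa using ((hasDerivAt_const x.2 ((x.1:ℂ)^2)).add hsq).add
      (hasDerivAt_const x.2 (Complex.I*(x.1:ℂ)))
  have h := hnum.div hden (Dfl_ne_zero hx)
  have hne : ((x.1:ℂ)^2+(x.2:ℂ)^2+Complex.I*(x.1:ℂ)) ≠ 0 := Dfl_ne_zero hx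
  have hval : ((x.1:ℂ) * ((x.1:ℂ)^2+(x.2:ℂ)^2+Complex.I*(x.1:ℂ))
      - (x.1:ℂ)*(x.2:ℂ) * (2*(x.2:ℂ)))
      / ((x.1:ℂ)^2+(x.2:ℂ)^2+Complex.I*(x.1:ℂ))^2 = gτ₂ x := by
    rw [gτ₂, Dfl]
    field_simp
    ring
  rw [← hval]; exact h

lemma fderiv1_m3 (hx : x ≠ 0) : fderiv ℝ mFl₃ x (1, 0) = F13 x := by
  apply fderiv_apply_e1 (dm₃ hx)
  have hid := hasDerivAt_ofReal x.1
  have hsq : HasDerivAt (fun s : ℝ => ((s:ℂ))^2) (2*(x.1:ℂ)) x.1 := by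
    simpa [pow_two, two_mul] using hid.mul hid
  have hden : HasDerivAt (fun s : ℝ => (s:ℂ)^2 + (x.2:ℂ)^2 + Complex.I*(s:ℂ))
      (2*(x.1:ℂ)+Complex.I) x.1 := by
    simpa using (hsq.add (hasDerivAt_const x.1 ((x.2:ℂ)^2))).add (hid.const_mul Complex.I)
  have h := hsq.div hden (Dfl_ne_zero hx)
  have hne : ((x.1:ℂ)^2+(x.2:ℂ)^2+Complex.I*(x.1:ℂ)) ≠ 0 := Dfl_ne_zero hx
  have hval : ((2*(x.1:ℂ)) * ((x.1:ℂ)^2+(x.2:ℂ)^2+Complex.I*(x.1:ℂ))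
      - (x.1:ℂ)^2 * (2*(x.1:ℂ)+Complex.I))
      / ((x.1:ℂ)^2+(x.2:ℂ)^2+Complex.I*(x.1:ℂ))^2 = F13 x := by
    rw [F13, Dfl]
    field_simp
    ring
  rw [← hval]; exact h

lemma fderiv2_m3 (hx : x ≠ 0) : fderiv ℝ mFl₃ x (0, 1) = gτ₃ x := by
  apply fderiv_apply_e2 (dm₃ hx)
  have hid := hasDerivAt_ofReal x.2
  have hsq : HasDerivAt (fun t : ℝ => ((t:ℂ))^2) (2*(x.2:ℂ)) x.2 := by
    simpa [pow_two, two_mul] using hid.mul hid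
  have hnum : HasDerivAt (fun _ : ℝ => (x.1:ℂ)^2) 0 x.2 := hasDerivAt_const _ _
  have hden : HasDerivAt (fun t : ℝ => (x.1:ℂ)^2 + (t:ℂ)^2 + Complex.I*(x.1:ℂ))
      (2*(x.2:ℂ)) x.2 := by
    simpa using ((hasDerivAt_const x.2 ((x.1:ℂ)^2)).add hsq).add
      (hasDerivAt_const x.2 (Complex.I*(x.1:ℂ)))
  have h := hnum.div hden (Dfl_ne_zero hx)
  have hne : ((x.1:ℂ)^2+(x.2:ℂ)^2+Complex.I*(x.1:ℂ)) ≠ 0 := Dfl_ne_zero hx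
  have hval : ((0:ℂ) * ((x.1:ℂ)^2+(x.2:ℂ)^2+Complex.I*(x.1:ℂ))
      - (x.1:ℂ)^2 * (2*(x.2:ℂ)))
      / ((x.1:ℂ)^2+(x.2:ℂ)^2+Complex.I*(x.1:ℂ))^2 = gτ₃ x := by
    rw [gτ₃, Dfl]
    field_simp
    ring
  rw [← hval]; exact h

end slices

section mixed
variable {q : ℝ × ℝ}

lemma fderiv12_m1 (hq : q ≠ 0) :
    fderiv ℝ (fun x => fderiv ℝ mFl₁ x (0, 1)) q (1, 0) = K₁ q := by
  have hev : (fun x => fderiv ℝ mFl₁ x (0, 1)) =ᶠ[nhds q] gτ₁ := by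
    filter_upwards [IsOpen.mem_nhds isOpen_ne hq] with x hx
    exact fderiv2_m1 hx
  rw [hev.fderiv_eq]
  apply fderiv_apply_e1 (dgτ₁ hq)
  have hid := hasDerivAt_ofReal q.1
  have hsq : HasDerivAt (fun s : ℝ => ((s:ℂ))^2) (2*(q.1:ℂ)) q.1 := by
    simpa [pow_two, two_mul] using hid.mul hid
  have hnum : HasDerivAt (fun s : ℝ => (-2*(q.2:ℂ)) * ((s:ℂ)^2 + Complex.I*(s:ℂ)))
      ((-2*(q.2:ℂ)) * (2*(q.1:ℂ)+Complex.I)) q.1 := by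
    have h0 : HasDerivAt (fun s : ℝ => (s:ℂ)^2 + Complex.I*(s:ℂ))
        (2*(q.1:ℂ)+Complex.I) q.1 := by
      simpa using hsq.add (hid.const_mul Complex.I)
    exact h0.const_mul _
  have hden : HasDerivAt (fun s : ℝ => (s:ℂ)^2 + (q.2:ℂ)^2 + Complex.I*(s:ℂ))
      (2*(q.1:ℂ)+Complex.I) q.1 := by
    simpa using (hsq.add (hasDerivAt_const q.1 ((q.2:ℂ)^2))).add (hid.const_mul Complex.I)
  have hne : ((q.1:ℂ)^2+(q.2:ℂ)^2+Complex.I*(q.1:ℂ)) ≠ 0 := Dfl_ne_zero hq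
  have h := hnum.div (hden.mul hden) (mul_ne_zero hne hne)
  have hval : (((-2*(q.2:ℂ)) * (2*(q.1:ℂ)+Complex.I)) *
      (((q.1:ℂ)^2+(q.2:ℂ)^2+Complex.I*(q.1:ℂ)) * ((q.1:ℂ)^2+(q.2:ℂ)^2+Complex.I*(q.1:ℂ)))
      - (-2*(q.2:ℂ)) * ((q.1:ℂ)^2 + Complex.I*(q.1:ℂ)) *
        ((2*(q.1:ℂ)+Complex.I) * ((q.1:ℂ)^2+(q.2:ℂ)^2+Complex.I*(q.1:ℂ))
          + ((q.1:ℂ)^2+(q.2:ℂ)^2+Complex.I*(q.1:ℂ)) * (2*(q.1:ℂ)+Complex.I)))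
      / (((q.1:ℂ)^2+(q.2:ℂ)^2+Complex.I*(q.1:ℂ)) *
          ((q.1:ℂ)^2+(q.2:ℂ)^2+Complex.I*(q.1:ℂ)))^2 = K₁ q := by
    rw [K₁, Dfl]
    field_simp
    ring
  rw [← hval]; exact h

lemma fderiv12_m2 (hq : q ≠ 0) :
    fderiv ℝ (fun x => fderiv ℝ mFl₂ x (0, 1)) q (1, 0) = K₂ q := by
  have hev : (fun x => fderiv ℝ mFl₂ x (0, 1)) =ᶠ[nhds q] gτ₂ := by
    filter_upwards [IsOpen.mem_nhds isOpen_ne hq] with x hx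
    exact fderiv2_m2 hx
  rw [hev.fderiv_eq]
  apply fderiv_apply_e1 (dgτ₂ hq)
  have hid := hasDerivAt_ofReal q.1
  have hsq : HasDerivAt (fun s : ℝ => ((s:ℂ))^2) (2*(q.1:ℂ)) q.1 := by
    simpa [pow_two, two_mul] using hid.mul hid
  have hnum : HasDerivAt
      (fun s : ℝ => (s:ℂ) * ((s:ℂ)^2 - (q.2:ℂ)^2 + Complex.I*(s:ℂ)))
      (1 * ((q.1:ℂ)^2 - (q.2:ℂ)^2 + Complex.I*(q.1:ℂ))
        + (q.1:ℂ) * (2*(q.1:ℂ)+Complex.I)) q.1 := by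
    have h0 : HasDerivAt (fun s : ℝ => (s:ℂ)^2 - (q.2:ℂ)^2 + Complex.I*(s:ℂ))
        (2*(q.1:ℂ)+Complex.I) q.1 := by
      simpa using (hsq.sub (hasDerivAt_const q.1 ((q.2:ℂ)^2))).add (hid.const_mul Complex.I)
    exact hid.mul h0
  have hden : HasDerivAt (fun s : ℝ => (s:ℂ)^2 + (q.2:ℂ)^2 + Complex.I*(s:ℂ))
      (2*(q.1:ℂ)+Complex.I) q.1 := by
    simpa using (hsq.add (hasDerivAt_const q.1 ((q.2:ℂ)^2))).add (hid.const_mul Complex.I)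
  have hne : ((q.1:ℂ)^2+(q.2:ℂ)^2+Complex.I*(q.1:ℂ)) ≠ 0 := Dfl_ne_zero hq
  have h := hnum.div (hden.mul hden) (mul_ne_zero hne hne)
  have hval : ((1 * ((q.1:ℂ)^2 - (q.2:ℂ)^2 + Complex.I*(q.1:ℂ))
        + (q.1:ℂ) * (2*(q.1:ℂ)+Complex.I)) *
      (((q.1:ℂ)^2+(q.2:ℂ)^2+Complex.I*(q.1:ℂ)) * ((q.1:ℂ)^2+(q.2:ℂ)^2+Complex.I*(q.1:ℂ)))
      - (q.1:ℂ) * ((q.1:ℂ)^2 - (q.2:ℂ)^2 + Complex.I*(q.1:ℂ)) *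
        ((2*(q.1:ℂ)+Complex.I) * ((q.1:ℂ)^2+(q.2:ℂ)^2+Complex.I*(q.1:ℂ))
          + ((q.1:ℂ)^2+(q.2:ℂ)^2+Complex.I*(q.1:ℂ)) * (2*(q.1:ℂ)+Complex.I)))
      / (((q.1:ℂ)^2+(q.2:ℂ)^2+Complex.I*(q.1:ℂ)) *
          ((q.1:ℂ)^2+(q.2:ℂ)^2+Complex.I*(q.1:ℂ)))^2 = K₂ q := by
    rw [K₂, Dfl]
    field_simp
    ring
  rw [← hval]; exact h

lemma fderiv12_m3 (hq : q ≠ 0) :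
    fderiv ℝ (fun x => fderiv ℝ mFl₃ x (0, 1)) q (1, 0) = K₃ q := by
  have hev : (fun x => fderiv ℝ mFl₃ x (0, 1)) =ᶠ[nhds q] gτ₃ := by
    filter_upwards [IsOpen.mem_nhds isOpen_ne hq] with x hx
    exact fderiv2_m3 hx
  rw [hev.fderiv_eq]
  apply fderiv_apply_e1 (dgτ₃ hq)
  have hid := hasDerivAt_ofReal q.1
  have hsq : HasDerivAt (fun s : ℝ => ((s:ℂ))^2) (2*(q.1:ℂ)) q.1 := by
    simpa [pow_two, two_mul] using hid.mul hid
  have hnum : HasDerivAt (fun s : ℝ => (-2*(q.2:ℂ)) * ((s:ℂ))^2)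
      ((-2*(q.2:ℂ)) * (2*(q.1:ℂ))) q.1 := hsq.const_mul _
  have hden : HasDerivAt (fun s : ℝ => (s:ℂ)^2 + (q.2:ℂ)^2 + Complex.I*(s:ℂ))
      (2*(q.1:ℂ)+Complex.I) q.1 := by
    simpa using (hsq.add (hasDerivAt_const q.1 ((q.2:ℂ)^2))).add (hid.const_mul Complex.I)
  have hne : ((q.1:ℂ)^2+(q.2:ℂ)^2+Complex.I*(q.1:ℂ)) ≠ 0 := Dfl_ne_zero hq
  have h := hnum.div (hden.mul hden) (mul_ne_zero hne hne)
  have hval : (((-2*(q.2:ℂ)) * (2*(q.1:ℂ))) *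
      (((q.1:ℂ)^2+(q.2:ℂ)^2+Complex.I*(q.1:ℂ)) * ((q.1:ℂ)^2+(q.2:ℂ)^2+Complex.I*(q.1:ℂ)))
      - (-2*(q.2:ℂ)) * (q.1:ℂ)^2 *
        ((2*(q.1:ℂ)+Complex.I) * ((q.1:ℂ)^2+(q.2:ℂ)^2+Complex.I*(q.1:ℂ))
          + ((q.1:ℂ)^2+(q.2:ℂ)^2+Complex.I*(q.1:ℂ)) * (2*(q.1:ℂ)+Complex.I)))
      / (((q.1:ℂ)^2+(q.2:ℂ)^2+Complex.I*(q.1:ℂ)) *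
          ((q.1:ℂ)^2+(q.2:ℂ)^2+Complex.I*(q.1:ℂ)))^2 = K₃ q := by
    rw [K₃, Dfl]
    field_simp
    ring
  rw [← hval]; exact h

end mixed

section normbounds
variable (x : ℝ × ℝ)

lemma n2SI : ‖2*(x.1:ℂ)+Complex.I‖ ≤ 2* |x.1|+1 := by
  refine le_trans (norm_add_le _ _) ?_; simp

lemma nS2IS : ‖(x.1:ℂ)^2+Complex.I*(x.1:ℂ)‖ ≤ |x.1|^2+|x.1| := by
  refine le_trans (norm_add_le _ _) ?_; simp

lemma nTSIS : ‖(x.2:ℂ)^2-(x.1:ℂ)^2-Complex.I*(x.1:ℂ)‖ ≤ |x.2|^2+|x.1|^2+|x.1| := by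
  refine le_trans (norm_sub_le _ _) ?_
  have := norm_sub_le ((x.2:ℂ)^2) ((x.1:ℂ)^2)
  simp at this ⊢
  linarith

lemma nSTIS : ‖(x.1:ℂ)^2-(x.2:ℂ)^2+Complex.I*(x.1:ℂ)‖ ≤ |x.1|^2+|x.2|^2+|x.1| := by
  refine le_trans (norm_add_le _ _) ?_
  have := norm_sub_le ((x.1:ℂ)^2) ((x.2:ℂ)^2)
  simp at this ⊢
  linarith

lemma n3S : ‖3*(x.1:ℂ)^2-(x.2:ℂ)^2+2*Complex.I*(x.1:ℂ)‖ ≤ 3* |x.1|^2+|x.2|^2+2* |x.1| := by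
  refine le_trans (norm_add_le _ _) ?_
  have := norm_sub_le (3*(x.1:ℂ)^2) ((x.2:ℂ)^2)
  simp [mul_assoc] at this ⊢
  linarith

lemma n2TIS : ‖2*(x.2:ℂ)^2+Complex.I*(x.1:ℂ)‖ ≤ 2* |x.2|^2+|x.1| := by
  refine le_trans (norm_add_le _ _) ?_; simp

lemma nT2S2 : ‖(x.2:ℂ)^2-(x.1:ℂ)^2‖ ≤ |x.2|^2+|x.1|^2 := by
  refine le_trans (norm_sub_le _ _) ?_; simp

end normbounds

section mihlin
variable {q : ℝ × ℝ}

lemma mihlin1 (hq : q ≠ 0) : mihlinBound mFl₁ q ≤ 30 := by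
  have hD := Dfl_ne_zero hq
  have hd : 0 < ‖Dfl q‖ := norm_pos_iff.mpr hD
  have hdd : 0 < ‖Dfl q * Dfl q‖ := norm_pos_iff.mpr (mul_ne_zero hD hD)
  have hddd : 0 < ‖Dfl q * (Dfl q * Dfl q)‖ :=
    norm_pos_iff.mpr (mul_ne_zero hD (mul_ne_zero hD hD))
  obtain ⟨b1,b2,b3,b4,b5,b6,b7,b8,b9,b10,b11,b12⟩ :=
    bnds |q.1| |q.2| ‖Dfl q‖ (abs_nonneg _) (abs_nonneg _) hd
      (by rw [_root_.sq_abs, _root_.sq_abs]; exact sq_le_normD q)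
      (abs_fst_le_normD q)
      (by rw [_root_.sq_abs, _root_.sq_abs]; exact s_r2_le q)
  have t1 : ‖mFl₁ q‖ ≤ 2 := by
    rw [mFl₁, norm_div, div_le_iff₀ hd]
    calc ‖(q.1:ℂ)^2+Complex.I*(q.1:ℂ)‖ ≤ |q.1|^2+|q.1| := nS2IS q
    _ ≤ 2*‖Dfl q‖ := by linarith
  have t2 : ‖(q.1:ℂ) * fderiv ℝ mFl₁ q (1,0)‖ ≤ 3 := by
    have e : (q.1:ℂ) * fderiv ℝ mFl₁ q (1,0)
        = ((q.1:ℂ) * ((2*(q.1:ℂ)+Complex.I) * (q.2:ℂ)^2)) / (Dfl q * Dfl q) := by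
      rw [fderiv1_m1 hq, F11]; ring
    rw [e, norm_div, div_le_iff₀ hdd]
    calc ‖(q.1:ℂ) * ((2*(q.1:ℂ)+Complex.I) * (q.2:ℂ)^2)‖
        = |q.1| * (‖2*(q.1:ℂ)+Complex.I‖ * |q.2|^2) := by
          simp [norm_mul]
      _ ≤ |q.1| * ((2* |q.1|+1) * |q.2|^2) := by gcongr; exact n2SI q
      _ ≤ 3*(‖Dfl q‖*‖Dfl q‖) := by nlinarith [b2]
      _ = 3*‖Dfl q * Dfl q‖ := by rw [norm_mul]
  have t3 : ‖(q.2:ℂ) * fderiv ℝ mFl₁ q (0,1)‖ ≤ 4 := by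
    have e : (q.2:ℂ) * fderiv ℝ mFl₁ q (0,1)
        = ((q.2:ℂ) * ((-2*(q.2:ℂ)) * ((q.1:ℂ)^2+Complex.I*(q.1:ℂ)))) / (Dfl q * Dfl q) := by
      rw [fderiv2_m1 hq, gτ₁]; ring
    rw [e, norm_div, div_le_iff₀ hdd]
    calc ‖(q.2:ℂ) * ((-2*(q.2:ℂ)) * ((q.1:ℂ)^2+Complex.I*(q.1:ℂ)))‖
        = |q.2| * ((2* |q.2|) * ‖(q.1:ℂ)^2+Complex.I*(q.1:ℂ)‖) := by
          simp [norm_mul]; try ring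
      _ ≤ |q.2| * ((2* |q.2|) * (|q.1|^2+|q.1|)) := by gcongr; exact nS2IS q
      _ ≤ 4*(‖Dfl q‖*‖Dfl q‖) := by nlinarith [b3]
      _ = 4*‖Dfl q * Dfl q‖ := by rw [norm_mul]
  have t4 : ‖(q.1:ℂ) * (q.2:ℂ) * fderiv ℝ (fun x => fderiv ℝ mFl₁ x (0,1)) q (1,0)‖ ≤ 12 := by
    have e : (q.1:ℂ) * (q.2:ℂ) * fderiv ℝ (fun x => fderiv ℝ mFl₁ x (0,1)) q (1,0)
        = (((q.1:ℂ)*(q.2:ℂ)) * ((-2*(q.2:ℂ)) * ((2*(q.1:ℂ)+Complex.I) *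
            ((q.2:ℂ)^2-(q.1:ℂ)^2-Complex.I*(q.1:ℂ))))) / (Dfl q * (Dfl q * Dfl q)) := by
      rw [fderiv12_m1 hq, K₁]; ring
    rw [e, norm_div, div_le_iff₀ hddd]
    calc ‖((q.1:ℂ)*(q.2:ℂ)) * ((-2*(q.2:ℂ)) * ((2*(q.1:ℂ)+Complex.I) *
            ((q.2:ℂ)^2-(q.1:ℂ)^2-Complex.I*(q.1:ℂ))))‖
        = (|q.1| * |q.2|) * ((2* |q.2|) * (‖2*(q.1:ℂ)+Complex.I‖ *
            ‖(q.2:ℂ)^2-(q.1:ℂ)^2-Complex.I*(q.1:ℂ)‖)) := by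
          simp [norm_mul]; try ring
      _ ≤ (|q.1| * |q.2|) * ((2* |q.2|) * ((2* |q.1|+1) * (|q.2|^2+|q.1|^2+|q.1|))) := by
          gcongr
          · exact n2SI q
          · exact nTSIS q
      _ ≤ 12*(‖Dfl q‖*(‖Dfl q‖*‖Dfl q‖)) := by nlinarith [b4]
      _ = 12*‖Dfl q * (Dfl q * Dfl q)‖ := by rw [norm_mul, norm_mul]
  unfold mihlinBound
  linarith

lemma mihlin2 (hq : q ≠ 0) : mihlinBound mFl₂ q ≤ 30 := by
  have hD := Dfl_ne_zero hq
  have hd : 0 < ‖Dfl q‖ := norm_pos_iff.mpr hD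
  have hdd : 0 < ‖Dfl q * Dfl q‖ := norm_pos_iff.mpr (mul_ne_zero hD hD)
  have hddd : 0 < ‖Dfl q * (Dfl q * Dfl q)‖ :=
    norm_pos_iff.mpr (mul_ne_zero hD (mul_ne_zero hD hD))
  obtain ⟨b1,b2,b3,b4,b5,b6,b7,b8,b9,b10,b11,b12⟩ :=
    bnds |q.1| |q.2| ‖Dfl q‖ (abs_nonneg _) (abs_nonneg _) hd
      (by rw [_root_.sq_abs, _root_.sq_abs]; exact sq_le_normD q)
      (abs_fst_le_normD q)
      (by rw [_root_.sq_abs, _root_.sq_abs]; exact s_r2_le q)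
  have t1 : ‖mFl₂ q‖ ≤ 1 := by
    rw [mFl₂, norm_div, div_le_iff₀ hd]
    calc ‖(q.1:ℂ)*(q.2:ℂ)‖ = |q.1| * |q.2| := by simp
    _ ≤ 1*‖Dfl q‖ := by linarith
  have t2 : ‖(q.1:ℂ) * fderiv ℝ mFl₂ q (1,0)‖ ≤ 1 := by
    have e : (q.1:ℂ) * fderiv ℝ mFl₂ q (1,0)
        = ((q.1:ℂ) * ((q.2:ℂ) * ((q.2:ℂ)^2-(q.1:ℂ)^2))) / (Dfl q * Dfl q) := by
      rw [fderiv1_m2 hq, F12]; ring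
    rw [e, norm_div, div_le_iff₀ hdd]
    calc ‖(q.1:ℂ) * ((q.2:ℂ) * ((q.2:ℂ)^2-(q.1:ℂ)^2))‖
        = |q.1| * (|q.2| * ‖(q.2:ℂ)^2-(q.1:ℂ)^2‖) := by simp [norm_mul]
      _ ≤ |q.1| * (|q.2| * (|q.2|^2+|q.1|^2)) := by gcongr; exact nT2S2 q
      _ ≤ 1*(‖Dfl q‖*‖Dfl q‖) := by nlinarith [b6]
      _ = 1*‖Dfl q * Dfl q‖ := by rw [norm_mul]
  have t3 : ‖(q.2:ℂ) * fderiv ℝ mFl₂ q (0,1)‖ ≤ 2 := by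
    have e : (q.2:ℂ) * fderiv ℝ mFl₂ q (0,1)
        = ((q.2:ℂ) * ((q.1:ℂ) * ((q.1:ℂ)^2-(q.2:ℂ)^2+Complex.I*(q.1:ℂ)))) / (Dfl q * Dfl q) := by
      rw [fderiv2_m2 hq, gτ₂]; ring
    rw [e, norm_div, div_le_iff₀ hdd]
    calc ‖(q.2:ℂ) * ((q.1:ℂ) * ((q.1:ℂ)^2-(q.2:ℂ)^2+Complex.I*(q.1:ℂ)))‖
        = |q.2| * (|q.1| * ‖(q.1:ℂ)^2-(q.2:ℂ)^2+Complex.I*(q.1:ℂ)‖) := by simp [norm_mul]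
      _ ≤ |q.2| * (|q.1| * (|q.1|^2+|q.2|^2+|q.1|)) := by gcongr; exact nSTIS q
      _ ≤ 2*(‖Dfl q‖*‖Dfl q‖) := by nlinarith [b7]
      _ = 2*‖Dfl q * Dfl q‖ := by rw [norm_mul]
  have t4 : ‖(q.1:ℂ) * (q.2:ℂ) * fderiv ℝ (fun x => fderiv ℝ mFl₂ x (0,1)) q (1,0)‖ ≤ 18 := by
    have e : (q.1:ℂ) * (q.2:ℂ) * fderiv ℝ (fun x => fderiv ℝ mFl₂ x (0,1)) q (1,0)
        = (((q.1:ℂ)*(q.2:ℂ)) * ((3*(q.1:ℂ)^2-(q.2:ℂ)^2+2*Complex.I*(q.1:ℂ)) * Dfl q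
            - (2*(q.1:ℂ)) * (((q.1:ℂ)^2-(q.2:ℂ)^2+Complex.I*(q.1:ℂ)) * (2*(q.1:ℂ)+Complex.I))))
          / (Dfl q * (Dfl q * Dfl q)) := by
      rw [fderiv12_m2 hq, K₂]; ring
    rw [e, norm_div, div_le_iff₀ hddd]
    have hin : ‖(3*(q.1:ℂ)^2-(q.2:ℂ)^2+2*Complex.I*(q.1:ℂ)) * Dfl q
        - (2*(q.1:ℂ)) * (((q.1:ℂ)^2-(q.2:ℂ)^2+Complex.I*(q.1:ℂ)) * (2*(q.1:ℂ)+Complex.I))‖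
        ≤ (3* |q.1|^2+|q.2|^2+2* |q.1|)*‖Dfl q‖
          + 2* |q.1| *((|q.1|^2+|q.2|^2+|q.1|)*(2* |q.1|+1)) := by
      refine le_trans (norm_sub_le _ _) ?_
      have h1 : ‖(3*(q.1:ℂ)^2-(q.2:ℂ)^2+2*Complex.I*(q.1:ℂ)) * Dfl q‖
          ≤ (3* |q.1|^2+|q.2|^2+2* |q.1|)*‖Dfl q‖ := by
        rw [norm_mul]; gcongr; exact n3S q
      have h2 : ‖(2*(q.1:ℂ)) * (((q.1:ℂ)^2-(q.2:ℂ)^2+Complex.I*(q.1:ℂ)) * (2*(q.1:ℂ)+Complex.I))‖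
          ≤ 2* |q.1| *((|q.1|^2+|q.2|^2+|q.1|)*(2* |q.1|+1)) := by
        rw [norm_mul]
        have e2 : ‖2*(q.1:ℂ)‖ = 2* |q.1| := by simp
        rw [e2, norm_mul]
        gcongr
        · exact nSTIS q
        · exact n2SI q
      linarith
    calc ‖((q.1:ℂ)*(q.2:ℂ)) * ((3*(q.1:ℂ)^2-(q.2:ℂ)^2+2*Complex.I*(q.1:ℂ)) * Dfl q
            - (2*(q.1:ℂ)) * (((q.1:ℂ)^2-(q.2:ℂ)^2+Complex.I*(q.1:ℂ)) * (2*(q.1:ℂ)+Complex.I)))‖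
        = (|q.1| * |q.2|) * ‖(3*(q.1:ℂ)^2-(q.2:ℂ)^2+2*Complex.I*(q.1:ℂ)) * Dfl q
            - (2*(q.1:ℂ)) * (((q.1:ℂ)^2-(q.2:ℂ)^2+Complex.I*(q.1:ℂ)) * (2*(q.1:ℂ)+Complex.I))‖ := by
          rw [norm_mul]; simp
      _ ≤ (|q.1| * |q.2|) * ((3* |q.1|^2+|q.2|^2+2* |q.1|)*‖Dfl q‖
            + 2* |q.1| *((|q.1|^2+|q.2|^2+|q.1|)*(2* |q.1|+1))) := by
          gcongr
      _ ≤ 18*(‖Dfl q‖*(‖Dfl q‖*‖Dfl q‖)) := by nlinarith [b8]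
      _ = 18*‖Dfl q * (Dfl q * Dfl q)‖ := by rw [norm_mul, norm_mul]
  unfold mihlinBound
  linarith

lemma mihlin3 (hq : q ≠ 0) : mihlinBound mFl₃ q ≤ 30 := by
  have hD := Dfl_ne_zero hq
  have hd : 0 < ‖Dfl q‖ := norm_pos_iff.mpr hD
  have hdd : 0 < ‖Dfl q * Dfl q‖ := norm_pos_iff.mpr (mul_ne_zero hD hD)
  have hddd : 0 < ‖Dfl q * (Dfl q * Dfl q)‖ :=
    norm_pos_iff.mpr (mul_ne_zero hD (mul_ne_zero hD hD))
  obtain ⟨b1,b2,b3,b4,b5,b6,b7,b8,b9,b10,b11,b12⟩ :=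
    bnds |q.1| |q.2| ‖Dfl q‖ (abs_nonneg _) (abs_nonneg _) hd
      (by rw [_root_.sq_abs, _root_.sq_abs]; exact sq_le_normD q)
      (abs_fst_le_normD q)
      (by rw [_root_.sq_abs, _root_.sq_abs]; exact s_r2_le q)
  have t1 : ‖mFl₃ q‖ ≤ 1 := by
    rw [mFl₃, norm_div, div_le_iff₀ hd]
    calc ‖(q.1:ℂ)^2‖ = |q.1|^2 := by simp
    _ ≤ 1*‖Dfl q‖ := by linarith
  have t2 : ‖(q.1:ℂ) * fderiv ℝ mFl₃ q (1,0)‖ ≤ 3 := by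
    have e : (q.1:ℂ) * fderiv ℝ mFl₃ q (1,0)
        = ((q.1:ℂ) * ((q.1:ℂ) * (2*(q.2:ℂ)^2+Complex.I*(q.1:ℂ)))) / (Dfl q * Dfl q) := by
      rw [fderiv1_m3 hq, F13]; ring
    rw [e, norm_div, div_le_iff₀ hdd]
    calc ‖(q.1:ℂ) * ((q.1:ℂ) * (2*(q.2:ℂ)^2+Complex.I*(q.1:ℂ)))‖
        = |q.1| * (|q.1| * ‖2*(q.2:ℂ)^2+Complex.I*(q.1:ℂ)‖) := by simp [norm_mul]
      _ ≤ |q.1| * (|q.1| * (2* |q.2|^2+|q.1|)) := by gcongr; exact n2TIS q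
      _ ≤ 3*(‖Dfl q‖*‖Dfl q‖) := by nlinarith [b10]
      _ = 3*‖Dfl q * Dfl q‖ := by rw [norm_mul]
  have t3 : ‖(q.2:ℂ) * fderiv ℝ mFl₃ q (0,1)‖ ≤ 2 := by
    have e : (q.2:ℂ) * fderiv ℝ mFl₃ q (0,1)
        = ((q.2:ℂ) * ((-2*(q.2:ℂ)) * (q.1:ℂ)^2)) / (Dfl q * Dfl q) := by
      rw [fderiv2_m3 hq, gτ₃]; ring
    rw [e, norm_div, div_le_iff₀ hdd]
    calc ‖(q.2:ℂ) * ((-2*(q.2:ℂ)) * (q.1:ℂ)^2)‖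
        = |q.2| * ((2* |q.2|) * |q.1|^2) := by simp [norm_mul]; try ring
      _ ≤ 2*(‖Dfl q‖*‖Dfl q‖) := by nlinarith [b11]
      _ = 2*‖Dfl q * Dfl q‖ := by rw [norm_mul]
  have t4 : ‖(q.1:ℂ) * (q.2:ℂ) * fderiv ℝ (fun x => fderiv ℝ mFl₃ x (0,1)) q (1,0)‖ ≤ 4 := by
    have e : (q.1:ℂ) * (q.2:ℂ) * fderiv ℝ (fun x => fderiv ℝ mFl₃ x (0,1)) q (1,0)
        = (((q.1:ℂ)*(q.2:ℂ)) * ((-4*((q.1:ℂ)*(q.2:ℂ))) * ((q.2:ℂ)^2-(q.1:ℂ)^2)))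
          / (Dfl q * (Dfl q * Dfl q)) := by
      rw [fderiv12_m3 hq, K₃]; ring
    rw [e, norm_div, div_le_iff₀ hddd]
    calc ‖((q.1:ℂ)*(q.2:ℂ)) * ((-4*((q.1:ℂ)*(q.2:ℂ))) * ((q.2:ℂ)^2-(q.1:ℂ)^2))‖
        = (|q.1| * |q.2|) * ((4*(|q.1| * |q.2|)) * ‖(q.2:ℂ)^2-(q.1:ℂ)^2‖) := by
          simp [norm_mul]; try ring
      _ ≤ (|q.1| * |q.2|) * ((4*(|q.1| * |q.2|)) * (|q.2|^2+|q.1|^2)) := by gcongr; exact nT2S2 q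
      _ ≤ 4*(‖Dfl q‖*(‖Dfl q‖*‖Dfl q‖)) := by nlinarith [b12]
      _ = 4*‖Dfl q * (Dfl q * Dfl q)‖ := by rw [norm_mul, norm_mul]
  unfold mihlinBound
  linarith

end mihlin

section smooth

lemma cS : ContDiff ℝ (⊤ : ℕ∞) (fun x : ℝ × ℝ => ((x.1 : ℝ) : ℂ)) :=
  Complex.ofRealCLM.contDiff.comp contDiff_fst

lemma cT : ContDiff ℝ (⊤ : ℕ∞) (fun x : ℝ × ℝ => ((x.2 : ℝ) : ℂ)) :=
  Complex.ofRealCLM.contDiff.comp contDiff_snd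

lemma cD : ContDiff ℝ (⊤ : ℕ∞) Dfl :=
  ((cS.pow 2).add (cT.pow 2)).add ((contDiff_const (c := Complex.I)).mul cS)

lemma cDinv : ContDiffOn ℝ (⊤ : ℕ∞) (fun x => (Dfl x)⁻¹) {q : ℝ × ℝ | q ≠ 0} :=
  cD.contDiffOn.inv fun _ hx => Dfl_ne_zero hx

lemma smooth₁ : ContDiffOn ℝ (⊤ : ℕ∞) mFl₁ {q : ℝ × ℝ | q ≠ 0} := by
  have h := (((cS.pow 2).add ((contDiff_const (c := Complex.I)).mul cS)).contDiffOn).mul cDinv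
  exact h.congr fun x _ => by rw [mFl₁, div_eq_mul_inv]

lemma smooth₂ : ContDiffOn ℝ (⊤ : ℕ∞) mFl₂ {q : ℝ × ℝ | q ≠ 0} := by
  have h := ((cS.mul cT).contDiffOn).mul cDinv
  exact h.congr fun x _ => by rw [mFl₂, div_eq_mul_inv]

lemma smooth₃ : ContDiffOn ℝ (⊤ : ℕ∞) mFl₃ {q : ℝ × ℝ | q ≠ 0} := by
  have h := ((cS.pow 2).contDiffOn).mul cDinv
  exact h.congr fun x _ => by rw [mFl₃, div_eq_mul_inv]

end smooth

/-- The multipliers `m₁ = (σ² + iσ)/D`, `m₂ = στ/D`, `m₃ = σ²/D` with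
`D = σ² + τ² + iσ` are smooth on `ℝ² ∖ {0}` and satisfy a uniform
Marcinkiewicz–Mihlin bound there. -/
theorem statement14 :
    ContDiffOn ℝ (⊤ : ℕ∞) mFl₁ {q : ℝ × ℝ | q ≠ 0} ∧
    ContDiffOn ℝ (⊤ : ℕ∞) mFl₂ {q : ℝ × ℝ | q ≠ 0} ∧
    ContDiffOn ℝ (⊤ : ℕ∞) mFl₃ {q : ℝ × ℝ | q ≠ 0} ∧
    ∃ c : ℝ, 0 < c ∧ ∀ q : ℝ × ℝ, q ≠ 0 →
      mihlinBound mFl₁ q ≤ c ∧ mihlinBound mFl₂ q ≤ c ∧ mihlinBound mFl₃ q ≤ c := by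
  exact ⟨smooth₁, smooth₂, smooth₃, 30, by norm_num,
    fun q hq => ⟨mihlin1 hq, mihlin2 hq, mihlin3 hq⟩⟩
end
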